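/- arXiv:2306.03884 — 3 statements merged into one kernel-verified Lean document; each statement's English description precedes it below -/
import Mathlib

section
/- Let m ≥ 2 and 1 ≤ a ≤ m-1, and let C be the multigraph on vertices s, t, v consisting of a bundle of a parallel edges between s and t and a bundle of m-a parallel edges between t and v, with terminals s and t. Then for all p ∈ [0,1], sRel(C,s,t;p) = (1-p)^a - (1-p)^m, and for all p ∈ (0,1), sRel(C,s,t;p) < (1-p) + (1-p)^{m-1} - 2(1-p)^m = sRel(G_{3,m},s,t;p). -/
/-- A finite loopless multigraph: a finite vertex type `V`, a finite edge type `E`,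
and an endpoint map assigning to each edge an unordered pair of distinct vertices. -/
structure Multigraph where
  V : Type
  E : Type
  [fintV : Fintype V]
  [fintE : Fintype E]
  [decV : DecidableEq V]
  [decE : DecidableEq E]
  ends : E → Sym2 V
  loopless : ∀ e, ¬ (ends e).IsDiag

attribute [instance] Multigraph.fintV Multigraph.fintE Multigraph.decV Multigraph.decE

namespace Multigraph

/-- The simple graph on `G.V` underlying the spanning subgraph of `G` with edge set `E'`. -/
def subgraph (G : Multigraph) (E' : Finset G.E) : SimpleGraph G.V where
  Adj u v := u ≠ v ∧ ∃ e ∈ E', G.ends e = s(u, v)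
  symm := by
    constructor
    rintro u v ⟨huv, e, he, hends⟩
    exact ⟨huv.symm, e, he, hends.trans (Sym2.eq_swap)⟩
  loopless := by constructor; rintro u ⟨h, -⟩; exact h rfl

/-- The spanning subgraph of `G` with edge set `E'` has exactly two connected components,
one containing `s` and the other containing `t`. -/
def SplitState (G : Multigraph) (s t : G.V) (E' : Finset G.E) : Prop :=
  ¬ (G.subgraph E').Reachable s t ∧
    ∀ v : G.V, (G.subgraph E').Reachable v s ∨ (G.subgraph E').Reachable v t

open scoped Classical in
/-- The split reliability of `G` with terminals `s` and `t`, at edge probability `p`. -/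
noncomputable def sRel (G : Multigraph) (s t : G.V) (p : ℝ) : ℝ :=
  ∑ E' : Finset G.E, if G.SplitState s t E' then
    p ^ E'.card * (1 - p) ^ (Fintype.card G.E - E'.card) else 0

open scoped Classical in
/-- `N_i(G,s,t)`: the number of edge subsets of cardinality `i` whose spanning subgraph has
exactly two connected components, one containing `s` and the other containing `t`. -/
noncomputable def Nst (G : Multigraph) (s t : G.V) (i : ℕ) : ℕ :=
  (Finset.univ.filter fun E' : Finset G.E => E'.card = i ∧ G.SplitState s t E').card

/-- A multigraph is connected when its underlying simple graph is. -/
def Connected (G : Multigraph) : Prop := (G.subgraph Finset.univ).Connected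

open scoped Classical in
/-- The all-terminal reliability of `G` at edge probability `p`. -/
noncomputable def Rel (G : Multigraph) (p : ℝ) : ℝ :=
  ∑ E' : Finset G.E, if (G.subgraph E').Connected then
    p ^ E'.card * (1 - p) ^ (Fintype.card G.E - E'.card) else 0

/-- `G` together with terminals `s ≠ t` is an optimal `(n,m)`-graph for split reliability. -/
def IsOptimal (n m : ℕ) (G : Multigraph) (s t : G.V) : Prop :=
  G.Connected ∧ Fintype.card G.V = n ∧ Fintype.card G.E = m ∧ s ≠ t ∧
    ∀ (H : Multigraph) (s' t' : H.V), H.Connected → Fintype.card H.V = n →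
      Fintype.card H.E = m → s' ≠ t' → ∀ p : ℝ, 0 < p → p < 1 →
        H.sRel s' t' p ≤ G.sRel s t p

/-- An isomorphism of multigraphs taking terminals `s,t` of `G` to terminals `u,v` of `H`. -/
def IsoTerm (G H : Multigraph) (s t : G.V) (u v : H.V) : Prop :=
  ∃ (φ : G.V ≃ H.V) (ψ : G.E ≃ H.E),
    (∀ e, H.ends (ψ e) = (G.ends e).map φ) ∧ φ s = u ∧ φ t = v

end Multigraph

namespace Multigraph

/-- `Gnm n m k`: the multigraph obtained from a path `v_0, v_1, …, v_{n-1}` (terminals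
`s = v_0`, `t = v_{n-1}`) by replacing the path edge from `v_k` to `v_{k+1}` by a bundle of
`m - n + 2` parallel edges (so that the graph has `m` edges in total when `m ≥ n - 1`). -/
def Gnm (n m k : ℕ) (hk : k < n - 1) : Multigraph where
  V := Fin n
  E := Fin m
  ends e :=
    if h : e.val < n - 1 then
      s((⟨e.val, by omega⟩ : Fin n), (⟨e.val + 1, by omega⟩ : Fin n))
    else
      s((⟨k, by omega⟩ : Fin n), (⟨k + 1, by omega⟩ : Fin n))
  loopless e := by
    by_cases h : e.val < n - 1 <;>
      simp [h, Sym2.mk_isDiag_iff, Fin.ext_iff]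

/-- The cycle on `n ≥ 2` vertices. -/
def cycleGraph (n : ℕ) (hn : 2 ≤ n) : Multigraph where
  V := Fin n
  E := Fin n
  ends e := s(e, (⟨(e.val + 1) % n, Nat.mod_lt _ (by omega)⟩ : Fin n))
  loopless e := by
    simp only [Sym2.mk_isDiag_iff, Fin.ext_iff, Fin.val_mk]
    intro hc
    rcases Nat.lt_or_ge (e.val + 1) n with h' | h'
    · rw [Nat.mod_eq_of_lt h'] at hc; omega
    · have he : e.val + 1 = n := by have := e.isLt; omega
      rw [he, Nat.mod_self] at hc
      omega

/-- The multigraph obtained from `G` by adjoining a new vertex (`none`) joined by a single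
new edge to the vertex `u` of `G`. -/
def addPendant (G : Multigraph) (u : G.V) : Multigraph where
  V := Option G.V
  E := Option G.E
  ends e := e.elim s(some u, none) (fun e' => (G.ends e').map some)
  loopless e := by
    cases e with
    | none => simp [Sym2.mk_isDiag_iff]
    | some e' =>
        show ¬ ((G.ends e').map some).IsDiag
        rw [Sym2.isDiag_map (Option.some_injective _)]
        exact G.loopless e'

/-- The disjoint union of two multigraphs. -/
def disjSum (A B : Multigraph) : Multigraph where
  V := A.V ⊕ B.V
  E := A.E ⊕ B.E
  ends := Sum.elim (fun e => (A.ends e).map Sum.inl) (fun e => (B.ends e).map Sum.inr)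
  loopless e := by
    cases e with
    | inl e =>
        show ¬ ((A.ends e).map Sum.inl).IsDiag
        rw [Sym2.isDiag_map Sum.inl_injective]
        exact A.loopless e
    | inr e =>
        show ¬ ((B.ends e).map Sum.inr).IsDiag
        rw [Sym2.isDiag_map Sum.inr_injective]
        exact B.loopless e

/-- The multigraph on three vertices `0, 1, 2` with a bundle of `a` parallel edges between
`0` and `1` and a bundle of `b` parallel edges between `1` and `2`. -/
def doubleBundle (a b : ℕ) : Multigraph where
  V := Fin 3
  E := Fin (a + b)
  ends e := if e.val < a then s((0 : Fin 3), (1 : Fin 3)) else s((1 : Fin 3), (2 : Fin 3))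
  loopless e := by
    by_cases h : e.val < a <;> simp [h, Sym2.mk_isDiag_iff]

/-- The multigraph on three vertices `0, 1, 2` with bundles of `a`, `b`, `c` parallel edges
between `0,1`, between `1,2`, and between `2,0` respectively. -/
def tripleBundle (a b c : ℕ) : Multigraph where
  V := Fin 3
  E := Fin (a + b + c)
  ends e :=
    if e.val < a then s((0 : Fin 3), (1 : Fin 3))
    else if e.val < a + b then s((1 : Fin 3), (2 : Fin 3))
    else s((2 : Fin 3), (0 : Fin 3))
  loopless e := by
    by_cases h : e.val < a
    · simp [h, Sym2.mk_isDiag_iff]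
    · by_cases h' : e.val < a + b <;> simp [h, h', Sym2.mk_isDiag_iff]

/-- The multigraph obtained from a path `v_0, …, v_{n-1}` by replacing the path edge at
position `k₁` by a bundle of `2` parallel edges and the path edge at position `k₂` by a
bundle of `m - n + 1` parallel edges (for `m ≥ n`, `k₁ ≠ k₂`, the graph has `m` edges). -/
def Gnm2 (n m k₁ k₂ : ℕ) (hk₁ : k₁ < n - 1) (hk₂ : k₂ < n - 1) : Multigraph where
  V := Fin n
  E := Fin m
  ends e :=
    if h : e.val < n - 1 then
      s((⟨e.val, by omega⟩ : Fin n), (⟨e.val + 1, by omega⟩ : Fin n))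
    else if e.val = n - 1 then
      s((⟨k₁, by omega⟩ : Fin n), (⟨k₁ + 1, by omega⟩ : Fin n))
    else
      s((⟨k₂, by omega⟩ : Fin n), (⟨k₂ + 1, by omega⟩ : Fin n))
  loopless e := by
    by_cases h : e.val < n - 1
    · simp [h, Sym2.mk_isDiag_iff, Fin.ext_iff]
    · by_cases h' : e.val = n - 1 <;> simp [h, h', Sym2.mk_isDiag_iff, Fin.ext_iff]

/-- The simple graph on `n ≥ 4` vertices consisting of a path `s = v_0, …, v_{n-3} = t` of
length `n - 3` together with two further vertices `v_{n-2}, v_{n-1}` forming a triangle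
with `t`. It has `n` vertices and `n` edges. -/
def triGraph (n : ℕ) (hn : 4 ≤ n) : Multigraph where
  V := Fin n
  E := Fin n
  ends e :=
    if h : e.val < n - 3 then
      s((⟨e.val, by omega⟩ : Fin n), (⟨e.val + 1, by omega⟩ : Fin n))
    else if e.val = n - 3 then
      s((⟨n - 3, by omega⟩ : Fin n), (⟨n - 2, by omega⟩ : Fin n))
    else if e.val = n - 2 then
      s((⟨n - 2, by omega⟩ : Fin n), (⟨n - 1, by omega⟩ : Fin n))
    else
      s((⟨n - 1, by omega⟩ : Fin n), (⟨n - 3, by omega⟩ : Fin n))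
  loopless e := by
    by_cases h : e.val < n - 3
    · simp [h, Sym2.mk_isDiag_iff, Fin.ext_iff]
    · by_cases h' : e.val = n - 3
      · simp only [dif_neg h, if_pos h', Sym2.mk_isDiag_iff, Fin.mk.injEq]; omega
      · by_cases h'' : e.val = n - 2
        · simp only [dif_neg h, if_neg h', if_pos h'', Sym2.mk_isDiag_iff, Fin.mk.injEq]; omega
        · simp only [dif_neg h, if_neg h', if_neg h'', Sym2.mk_isDiag_iff, Fin.mk.injEq]; omega

end Multigraph


namespace MGAux

lemma reach_eq {V : Type} {G : SimpleGraph V} {x y : V}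
    (h : ∀ z, ¬ G.Adj x z) (hr : G.Reachable x y) : x = y := by
  obtain ⟨w⟩ := hr
  cases w with
  | nil => rfl
  | cons h' _ => exact absurd h' (h _)

lemma sum_powerset_one {α : Type} [DecidableEq α] (p : ℝ) (S : Finset α) :
    ∑ E' ∈ S.powerset, p ^ E'.card * (1 - p) ^ (S.card - E'.card) = 1 := by
  have h := Finset.prod_add (fun _ : α => p) (fun _ => 1 - p) S
  simp only [Finset.prod_const] at h
  rw [show p + (1 - p) = 1 by ring, one_pow] at h
  conv_rhs => rw [h]
  apply Finset.sum_congr rfl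
  intro t ht
  rw [Finset.card_sdiff_of_subset (Finset.mem_powerset.mp ht)]

lemma sum_powerset_pow {α : Type} [DecidableEq α] (p : ℝ) (S : Finset α) (N : ℕ)
    (hS : S.card ≤ N) :
    ∑ E' ∈ S.powerset, p ^ E'.card * (1 - p) ^ (N - E'.card) = (1 - p) ^ (N - S.card) := by
  have h : ∀ E' ∈ S.powerset,
      p ^ E'.card * (1 - p) ^ (N - E'.card) =
        (p ^ E'.card * (1 - p) ^ (S.card - E'.card)) * (1 - p) ^ (N - S.card) := by
    intro E' hE'
    have hc : E'.card ≤ S.card := Finset.card_le_card (Finset.mem_powerset.mp hE')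
    rw [mul_assoc, ← pow_add]
    congr 2
    omega
  rw [Finset.sum_congr rfl h, ← Finset.sum_mul, sum_powerset_one, one_mul]

end MGAux

lemma MGAux.fin_mk_ne {n i j : ℕ} (hi : i < n) (hj : j < n) (h : i ≠ j) :
    (⟨i, hi⟩ : Fin n) ≠ ⟨j, hj⟩ := by simp [Fin.ext_iff, h]

namespace Multigraph

lemma subgraph_adj (G : Multigraph) (E' : Finset G.E) (u v : G.V) :
    (G.subgraph E').Adj u v ↔ u ≠ v ∧ ∃ e ∈ E', G.ends e = s(u, v) := Iff.rfl

lemma sRel_eq_sum (G : Multigraph) (s t : G.V) (p : ℝ) (T : Finset (Finset G.E))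
    (h : ∀ E', G.SplitState s t E' ↔ E' ∈ T) :
    G.sRel s t p = ∑ E' ∈ T, p ^ E'.card * (1 - p) ^ (Fintype.card G.E - E'.card) := by
  classical
  unfold sRel
  rw [← Finset.sum_subset (Finset.subset_univ T)
    (fun E' _ hE' => if_neg (fun hP => hE' ((h E').mp hP)))]
  exact Finset.sum_congr rfl (fun E' hE' => if_pos ((h E').mpr hE'))

lemma doubleBundle_ends_lt {a b : ℕ} {e : Fin (a + b)} (h : e.val < a) :
    (doubleBundle a b).ends e = s((0 : Fin 3), (1 : Fin 3)) := if_pos h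

lemma doubleBundle_ends_ge {a b : ℕ} {e : Fin (a + b)} (h : ¬ e.val < a) :
    (doubleBundle a b).ends e = s((1 : Fin 3), (2 : Fin 3)) := if_neg h

lemma doubleBundle_split {a b : ℕ} (E' : Finset (Fin (a + b))) :
    (doubleBundle a b).SplitState (0 : Fin 3) (1 : Fin 3) E' ↔ (∀ e ∈ E', a ≤ e.val) ∧ E'.Nonempty := by
  constructor
  · rintro ⟨hnr, hall⟩
    refine ⟨?_, ?_⟩
    · intro e he
      by_contra hlt
      push_neg at hlt
      have hadj : ((doubleBundle a b).subgraph E').Adj (0 : Fin 3) (1 : Fin 3) := by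
        refine (subgraph_adj _ _ _ _).mpr ?_
        exact ⟨show (0 : Fin 3) ≠ (1 : Fin 3) by decide, e, he, doubleBundle_ends_lt hlt⟩
      exact hnr hadj.reachable
    · by_contra hne
      rw [Finset.not_nonempty_iff_eq_empty] at hne
      subst hne
      have hiso : ∀ z, ¬ ((doubleBundle a b).subgraph ∅).Adj (2 : Fin 3) z := by
        intro z hadj
        obtain ⟨-, e, he, -⟩ := (subgraph_adj _ _ _ _).mp hadj
        exact absurd he (Finset.notMem_empty e)
      rcases hall (2 : Fin 3) with h2 | h2
      · exact absurd (show (2 : Fin 3) = 0 from MGAux.reach_eq hiso h2) (by decide)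
      · exact absurd (show (2 : Fin 3) = 1 from MGAux.reach_eq hiso h2) (by decide)
  · rintro ⟨hall, e₀, he₀⟩
    have hiso : ∀ z, ¬ ((doubleBundle a b).subgraph E').Adj (0 : Fin 3) z := by
      intro z hadj
      obtain ⟨hne, e, he, hends⟩ := (subgraph_adj _ _ _ _).mp hadj
      have hends := (doubleBundle_ends_ge (a := a) (b := b) (e := e)
        (by have := hall e he; omega)).symm.trans hends
      replace hends := Sym2.eq_iff.mp hends
      rcases hends with ⟨h1, h2⟩ | ⟨h1, h2⟩
      · exact absurd h1 (by decide)
      · exact absurd h2 (by decide)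
    constructor
    · intro hr
      exact absurd (show (0 : Fin 3) = 1 from MGAux.reach_eq hiso hr) (by decide)
    · intro v
      fin_cases v
      · exact Or.inl (SimpleGraph.Reachable.refl _)
      · exact Or.inr (SimpleGraph.Reachable.refl _)
      · have hadj : ((doubleBundle a b).subgraph E').Adj (2 : Fin 3) (1 : Fin 3) := by
          refine (subgraph_adj _ _ _ _).mpr ?_
          exact ⟨show (2 : Fin 3) ≠ (1 : Fin 3) by decide, e₀, he₀,
            (doubleBundle_ends_ge (by have := hall e₀ he₀; omega)).trans Sym2.eq_swap⟩
        exact Or.inr hadj.reachable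

lemma sRel_doubleBundle (a b : ℕ) (hb : 1 ≤ b) (p : ℝ) :
    (doubleBundle a b).sRel (0 : Fin 3) (1 : Fin 3) p = (1 - p) ^ a - (1 - p) ^ (a + b) := by
  classical
  set S : Finset (Fin (a + b)) := Finset.univ.filter (fun e => a ≤ e.val) with hS
  have hScard : S.card = b := by
    have h1 : S = Finset.Ici (⟨a, by omega⟩ : Fin (a + b)) := by
      ext e; simp [hS, Fin.le_def]
    rw [h1]
    simp [Fin.card_Ici]
  have hchar : ∀ E' : Finset (Fin (a + b)),
      (doubleBundle a b).SplitState (0 : Fin 3) (1 : Fin 3) E' ↔ E' ∈ S.powerset.erase ∅ := by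
    intro E'
    rw [doubleBundle_split, Finset.mem_erase, Finset.mem_powerset]
    constructor
    · rintro ⟨hall, hne⟩
      exact ⟨Finset.nonempty_iff_ne_empty.mp hne,
        fun e he => Finset.mem_filter.mpr ⟨Finset.mem_univ e, hall e he⟩⟩
    · rintro ⟨hne, hsub⟩
      exact ⟨fun e he => (Finset.mem_filter.mp (hsub he)).2,
        Finset.nonempty_iff_ne_empty.mpr hne⟩
  refine (sRel_eq_sum _ _ _ _ _ hchar).trans ?_
  show (∑ E' ∈ S.powerset.erase ∅,
      p ^ E'.card * (1 - p) ^ (Fintype.card (doubleBundle a b).E - E'.card)) =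
    (1 - p) ^ a - (1 - p) ^ (a + b)
  rw [Finset.sum_erase_eq_sub (Finset.empty_mem_powerset S)]
  have hN : Fintype.card (doubleBundle a b).E = a + b := Fintype.card_fin _
  rw [MGAux.sum_powerset_pow p S (Fintype.card (doubleBundle a b).E) (by omega)]
  rw [hN, hScard]
  simp [Nat.add_sub_cancel]

lemma Gnm3_ends {m : ℕ} (hm : 2 ≤ m) (hk : 1 < 3 - 1) (e : Fin m) :
    (Gnm 3 m 1 hk).ends e =
      if e.val = 0 then s((⟨0, by omega⟩ : Fin 3), (⟨1, by omega⟩ : Fin 3))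
      else s((⟨1, by omega⟩ : Fin 3), (⟨2, by omega⟩ : Fin 3)) := by
  show (if h : e.val < 3 - 1 then
      s((⟨e.val, by omega⟩ : Fin 3), (⟨e.val + 1, by omega⟩ : Fin 3))
    else s((⟨1, by omega⟩ : Fin 3), (⟨1 + 1, by omega⟩ : Fin 3))) = _
  by_cases h0 : e.val = 0
  · rw [dif_pos (by omega), if_pos h0]
    simp [h0]
  · rw [if_neg h0]
    by_cases h1 : e.val < 3 - 1
    · rw [dif_pos h1]
      have : e.val = 1 := by omega
      simp [this]
    · rw [dif_neg h1]

lemma Gnm3_split {m : ℕ} (hm : 2 ≤ m) (hk : 1 < 3 - 1) (E' : Finset (Fin m)) :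
    (Gnm 3 m 1 hk).SplitState (⟨0, by omega⟩ : Fin 3) (⟨2, by omega⟩ : Fin 3) E' ↔
      (E' = {(⟨0, by omega⟩ : Fin m)} ∨ ((⟨0, by omega⟩ : Fin m) ∉ E' ∧ E'.Nonempty)) := by
  set e₀ : Fin m := ⟨0, by omega⟩ with he₀def
  constructor
  · rintro ⟨hnr, hall⟩
    by_cases h0 : e₀ ∈ E'
    · left
      rw [Finset.eq_singleton_iff_unique_mem]
      refine ⟨h0, fun e he => ?_⟩
      by_contra hne
      have hval : ¬ e.val = 0 := fun h => hne (Fin.ext h)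
      have hadj01 : ((Gnm 3 m 1 hk).subgraph E').Adj ⟨0, by omega⟩ ⟨1, by omega⟩ :=
        (subgraph_adj _ _ _ _).mpr ⟨MGAux.fin_mk_ne _ _ (by omega), e₀, h0,
          by rw [Gnm3_ends hm hk]; simp [he₀def]; rfl⟩
      have hadj12 : ((Gnm 3 m 1 hk).subgraph E').Adj ⟨1, by omega⟩ ⟨2, by omega⟩ :=
        (subgraph_adj _ _ _ _).mpr ⟨MGAux.fin_mk_ne _ _ (by omega), e, he,
          by rw [Gnm3_ends hm hk, if_neg hval]; rfl⟩
      exact hnr (hadj01.reachable.trans hadj12.reachable)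
    · right
      refine ⟨h0, ?_⟩
      by_contra hne
      rw [Finset.not_nonempty_iff_eq_empty] at hne
      subst hne
      have hiso : ∀ z, ¬ ((Gnm 3 m 1 hk).subgraph ∅).Adj ⟨1, by omega⟩ z := by
        intro z hadj
        obtain ⟨-, e, he, -⟩ := (subgraph_adj _ _ _ _).mp hadj
        exact absurd he (Finset.notMem_empty e)
      rcases hall ⟨1, by omega⟩ with h1 | h1
      · exact absurd (MGAux.reach_eq hiso h1) (MGAux.fin_mk_ne _ _ (by omega))
      · exact absurd (MGAux.reach_eq hiso h1) (MGAux.fin_mk_ne _ _ (by omega))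
  · rintro (rfl | ⟨h0, e₁, he₁⟩)
    · have hiso : ∀ z, ¬ ((Gnm 3 m 1 hk).subgraph {e₀}).Adj ⟨2, by omega⟩ z := by
        intro z hadj
        obtain ⟨hne, e, he, hends⟩ := (subgraph_adj _ _ _ _).mp hadj
        replace he : e = e₀ := Finset.mem_singleton.mp he
        subst he
        have h3 : s((⟨0, by omega⟩ : Fin 3), (⟨1, by omega⟩ : Fin 3)) = s(⟨2, by omega⟩, z) :=
          (if_pos (show e₀.val = 0 from rfl)).symm.trans ((Gnm3_ends hm hk e₀).symm.trans hends)
        replace hends := Sym2.eq_iff.mp h3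
        rcases hends with ⟨h1, h2⟩ | ⟨h1, h2⟩
        · exact absurd h1 (MGAux.fin_mk_ne _ _ (by omega))
        · exact absurd h2 (MGAux.fin_mk_ne _ _ (by omega))
      refine ⟨fun hr => absurd (MGAux.reach_eq hiso hr.symm) (MGAux.fin_mk_ne _ _ (by omega)),
        fun v => ?_⟩
      fin_cases v
      · exact Or.inl (SimpleGraph.Reachable.refl _)
      · have hadj : ((Gnm 3 m 1 hk).subgraph {e₀}).Adj ⟨1, by omega⟩ ⟨0, by omega⟩ := by
          refine (subgraph_adj _ _ _ _).mpr
            ⟨MGAux.fin_mk_ne _ _ (by omega), e₀, Finset.mem_singleton_self e₀, ?_⟩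
          rw [Gnm3_ends hm hk, if_pos (by simp [he₀def])]
          exact Sym2.eq_swap
        exact Or.inl hadj.reachable
      · exact Or.inr (SimpleGraph.Reachable.refl _)
    · have hends : ∀ e ∈ E', (Gnm 3 m 1 hk).ends e =
          s((⟨1, by omega⟩ : Fin 3), (⟨2, by omega⟩ : Fin 3)) := by
        intro e he
        have hval : ¬ e.val = 0 := by
          intro h
          apply h0
          have he' : e = e₀ := Fin.ext (by simp [he₀def, h])
          rwa [he'] at he
        rw [Gnm3_ends hm hk, if_neg hval]
      have hiso : ∀ z, ¬ ((Gnm 3 m 1 hk).subgraph E').Adj ⟨0, by omega⟩ z := by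
        intro z hadj
        obtain ⟨hne, e, he, hends'⟩ := (subgraph_adj _ _ _ _).mp hadj
        replace hends' := Sym2.eq_iff.mp ((hends e he).symm.trans hends')
        rcases hends' with ⟨h1, h2⟩ | ⟨h1, h2⟩
        · exact absurd h1 (MGAux.fin_mk_ne _ _ (by omega))
        · exact absurd h2 (MGAux.fin_mk_ne _ _ (by omega))
      refine ⟨fun hr => absurd (MGAux.reach_eq hiso hr) (MGAux.fin_mk_ne _ _ (by omega)),
        fun v => ?_⟩
      fin_cases v
      · exact Or.inl (SimpleGraph.Reachable.refl _)
      · have hadj : ((Gnm 3 m 1 hk).subgraph E').Adj ⟨1, by omega⟩ ⟨2, by omega⟩ :=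
          (subgraph_adj _ _ _ _).mpr ⟨MGAux.fin_mk_ne _ _ (by omega), e₁, he₁, hends e₁ he₁⟩
        exact Or.inr hadj.reachable
      · exact Or.inr (SimpleGraph.Reachable.refl _)

lemma sRel_Gnm3 {m : ℕ} (hm : 2 ≤ m) (hk : 1 < 3 - 1) (p : ℝ) :
    (Gnm 3 m 1 hk).sRel (⟨0, by omega⟩ : Fin 3) (⟨2, by omega⟩ : Fin 3) p =
      (1 - p) + (1 - p) ^ (m - 1) - 2 * (1 - p) ^ m := by
  classical
  set e₀ : Fin m := ⟨0, by omega⟩ with he₀def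
  set S : Finset (Fin m) := Finset.univ.erase e₀ with hSdef
  have hScard : S.card = m - 1 := by
    rw [hSdef, Finset.card_erase_of_mem (Finset.mem_univ _)]
    simp
  have hchar : ∀ E' : Finset (Fin m),
      (Gnm 3 m 1 hk).SplitState (⟨0, by omega⟩ : Fin 3) (⟨2, by omega⟩ : Fin 3) E' ↔
        E' ∈ insert {e₀} (S.powerset.erase ∅) := by
    intro E'
    rw [Gnm3_split hm hk, Finset.mem_insert, Finset.mem_erase, Finset.mem_powerset, hSdef,
      Finset.subset_erase]
    constructor
    · rintro (h | ⟨h0, hne⟩)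
      · exact Or.inl h
      · exact Or.inr ⟨Finset.nonempty_iff_ne_empty.mp hne, Finset.subset_univ _, h0⟩
    · rintro (h | ⟨hne, -, h0⟩)
      · exact Or.inl h
      · exact Or.inr ⟨h0, Finset.nonempty_iff_ne_empty.mpr hne⟩
  refine (sRel_eq_sum _ _ _ _ _ hchar).trans ?_
  have hnotmem : ({e₀} : Finset (Fin m)) ∉ S.powerset.erase ∅ := by
    intro h
    rw [Finset.mem_erase, Finset.mem_powerset, hSdef, Finset.subset_erase] at h
    exact h.2.2 (Finset.mem_singleton_self e₀)
  show (∑ E' ∈ insert {e₀} (S.powerset.erase ∅),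
      p ^ E'.card * (1 - p) ^ (Fintype.card (Gnm 3 m 1 hk).E - E'.card)) =
    (1 - p) + (1 - p) ^ (m - 1) - 2 * (1 - p) ^ m
  rw [Finset.sum_insert hnotmem,
    Finset.sum_erase_eq_sub (Finset.empty_mem_powerset S)]
  have hN : Fintype.card (Gnm 3 m 1 hk).E = m := Fintype.card_fin _
  rw [MGAux.sum_powerset_pow p S (Fintype.card (Gnm 3 m 1 hk).E) (by omega)]
  rw [hN, hScard]
  obtain ⟨n, rfl⟩ : ∃ n, m = n + 1 := ⟨m - 1, by omega⟩
  simp only [Finset.card_singleton, Finset.card_empty, Nat.add_sub_cancel, pow_zero,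
    Nat.sub_zero, one_mul, pow_one]
  have h1 : n + 1 - n = 1 := by omega
  rw [h1, pow_one, pow_succ]
  ring

end Multigraph

/-- For the graph `C` on vertices `s, t, v` with a bundle of `a` edges
between `s` and `t` and `m-a` edges between `t` and `v` (terminals `s, t`):
`sRel(C,s,t;p) = (1-p)^a - (1-p)^m` for `p ∈ [0,1]`, and for `p ∈ (0,1)` this is strictly
less than `(1-p) + (1-p)^{m-1} - 2(1-p)^m = sRel(G_{3,m},s,t;p)`. -/
theorem sRel_C_lt (m : ℕ) (hm : 2 ≤ m) (a : ℕ) (ha₁ : 1 ≤ a) (ha₂ : a ≤ m - 1) :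
    (∀ p : ℝ, 0 ≤ p → p ≤ 1 →
      (Multigraph.doubleBundle a (m - a)).sRel (0 : Fin 3) (1 : Fin 3) p =
        (1 - p) ^ a - (1 - p) ^ m) ∧
    (∀ p : ℝ, 0 < p → p < 1 →
      (Multigraph.doubleBundle a (m - a)).sRel (0 : Fin 3) (1 : Fin 3) p <
        (1 - p) + (1 - p) ^ (m - 1) - 2 * (1 - p) ^ m ∧
      (1 - p) + (1 - p) ^ (m - 1) - 2 * (1 - p) ^ m =
        (Multigraph.Gnm 3 m 1 (by omega)).sRel
          (⟨0, by omega⟩ : Fin 3) (⟨2, by omega⟩ : Fin 3) p) := by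
  have hab : a + (m - a) = m := by omega
  have hb : 1 ≤ m - a := by omega
  have part1 : ∀ p : ℝ,
      (Multigraph.doubleBundle a (m - a)).sRel (0 : Fin 3) (1 : Fin 3) p =
        (1 - p) ^ a - (1 - p) ^ m := by
    intro p
    rw [Multigraph.sRel_doubleBundle a (m - a) hb p, hab]
  refine ⟨fun p _ _ => part1 p, fun p hp hp1 => ⟨?_, ?_⟩⟩
  · rw [part1 p]
    have hq0 : (0:ℝ) < 1 - p := by linarith
    have hq1 : 1 - p < 1 := by linarith
    have h1 : (1 - p) ^ a ≤ (1 - p) ^ 1 :=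
      pow_le_pow_of_le_one (by linarith) (by linarith) ha₁
    have h2 : (1 - p) ^ m < (1 - p) ^ (m - 1) := by
      apply pow_lt_pow_right_of_lt_one₀ hq0 hq1
      omega
    rw [pow_one] at h1
    linarith
  · exact (Multigraph.sRel_Gnm3 hm (by omega) p).symm
end

section
/- Let m > n ≥ 4 and let H be the multigraph obtained from a path s=v_0, v_1, …, v_{n-1}=t of length n-1 by replacing one edge of the path by a bundle of 2 parallel edges and replacing a different edge of the path by a bundle of m-n+1 parallel edges, with terminals s and t. Then N_{n-2}(H,s,t) = 2(m-n+1)(n-3) + 2 + (m-n+1), and this quantity exceeds 1+(n-2)(m-n+2) if and only if (m-n)(n-3) > 0; in particular N_{n-2}(H,s,t) > N_{n-2}(G_{n,m},s,t) whenever m > n ≥ 4. -/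
namespace SplitAux
open Finset

variable {n m : ℕ}

/-- If `u` and `v` are reachable in the spanning subgraph and position `j` is uncovered,
then `u` and `v` lie on the same side of `j`. -/
lemma side_of_reachable (hn : 2 ≤ n)
    (ends : Fin m → Sym2 (Fin n)) (lp : ∀ e, ¬ (ends e).IsDiag)
    (pos : Fin m → Fin (n - 1))
    (hends : ∀ e : Fin m, ends e =
      s((⟨(pos e).val, by have := (pos e).isLt; omega⟩ : Fin n),
        (⟨(pos e).val + 1, by have := (pos e).isLt; omega⟩ : Fin n)))
    (E' : Finset (Fin m)) {u v : Fin n}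
    (h : ((Multigraph.mk (Fin n) (Fin m) ends lp).subgraph E').Reachable u v)
    (j : Fin (n - 1)) (hj : j ∉ E'.image pos) :
    (u.val ≤ j.val ↔ v.val ≤ j.val) := by
  obtain ⟨w⟩ := h
  induction w with
  | nil => rfl
  | @cons a b c hab p ih =>
      obtain ⟨hne, e, he, hee⟩ := hab
      have hpe : pos e ≠ j := by
        intro hcontra
        exact hj (Finset.mem_image.mpr ⟨e, he, hcontra⟩)
      have hpe' : (pos e).val ≠ j.val := fun hv => hpe (Fin.ext hv)
      have hee2 : ends e = s(a, b) := hee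
      rw [hends e] at hee2
      rw [Sym2.eq_iff] at hee2
      have hstep : (a.val ≤ j.val ↔ b.val ≤ j.val) := by
        rcases hee2 with ⟨h1, h2⟩ | ⟨h1, h2⟩ <;>
          · rw [← h1, ← h2]
            simp only [Fin.val_mk]
            omega
      exact hstep.trans ih

lemma reachable_of_covered (hn : 2 ≤ n)
    (ends : Fin m → Sym2 (Fin n)) (lp : ∀ e, ¬ (ends e).IsDiag)
    (pos : Fin m → Fin (n - 1))
    (hends : ∀ e : Fin m, ends e =
      s((⟨(pos e).val, by have := (pos e).isLt; omega⟩ : Fin n),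
        (⟨(pos e).val + 1, by have := (pos e).isLt; omega⟩ : Fin n)))
    (E' : Finset (Fin m)) :
    ∀ (k : ℕ) (u v : Fin n), v.val - u.val = k → u.val ≤ v.val →
    (∀ j : Fin (n - 1), u.val ≤ j.val → j.val < v.val → j ∈ E'.image pos) →
    ((Multigraph.mk (Fin n) (Fin m) ends lp).subgraph E').Reachable u v := by
  intro k
  induction k with
  | zero =>
      intro u v hk hle _
      have : u = v := Fin.ext (by omega)
      rw [this]
  | succ k ih =>
      intro u v hk hle hcov
      have huv : u.val < v.val := by omega
      have hj : u.val < n - 1 := by have := v.isLt; omega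
      have hmem := hcov ⟨u.val, hj⟩ (le_refl _) huv
      obtain ⟨e, he, hpe⟩ := Finset.mem_image.mp hmem
      set u' : Fin n := ⟨u.val + 1, by omega⟩ with hu'
      have hadj : ((Multigraph.mk (Fin n) (Fin m) ends lp).subgraph E').Adj u u' := by
        refine ⟨by simp [Fin.ext_iff, hu'], e, he, ?_⟩
        show ends e = s(u, u')
        rw [hends e]
        have hv : (pos e).val = u.val := by rw [hpe]
        exact congrArg₂ (fun a b => s(a, b)) (Fin.ext hv) (Fin.ext (by simp [hv, hu']))
      have hrest : ((Multigraph.mk (Fin n) (Fin m) ends lp).subgraph E').Reachable u' v := by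
        apply ih u' v (by simp [hu']; omega) (by simp [hu']; omega)
        intro j hj1 hj2
        exact hcov j (by simp [hu'] at hj1; omega) hj2
      exact hadj.reachable.trans hrest

lemma splitState_iff (hn : 2 ≤ n)
    (ends : Fin m → Sym2 (Fin n)) (lp : ∀ e, ¬ (ends e).IsDiag)
    (pos : Fin m → Fin (n - 1))
    (hends : ∀ e : Fin m, ends e =
      s((⟨(pos e).val, by have := (pos e).isLt; omega⟩ : Fin n),
        (⟨(pos e).val + 1, by have := (pos e).isLt; omega⟩ : Fin n)))
    (E' : Finset (Fin m)) :
    (Multigraph.mk (Fin n) (Fin m) ends lp).SplitState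
        (⟨0, by omega⟩ : Fin n) (⟨n - 1, by omega⟩ : Fin n) E' ↔
      ∃ j : Fin (n - 1), E'.image pos = Finset.univ.erase j := by
  constructor
  · rintro ⟨hns, hall⟩
    -- there is a missing position
    have hmiss : ∃ j : Fin (n - 1), j ∉ E'.image pos := by
      by_contra hc
      push_neg at hc
      apply hns
      apply reachable_of_covered hn ends lp pos hends E' (n - 1 - 0)
      · rfl
      · simp
      · intro j _ _; exact hc j
    obtain ⟨j, hjm⟩ := hmiss
    refine ⟨j, ?_⟩
    -- uniqueness of the missing position
    have huniq : ∀ j' : Fin (n - 1), j' ∉ E'.image pos → j' = j := by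
      intro j' hj'
      by_contra hne
      -- wlog j.val < j'.val
      rcases Nat.lt_or_ge j.val j'.val with hlt | hge
      · set v : Fin n := ⟨j.val + 1, by have := j.isLt; omega⟩ with hv
        rcases hall v with hr | hr
        · have hside := side_of_reachable hn ends lp pos hends E' hr j hjm
          rw [hv] at hside
          simp only [Fin.val_mk] at hside
          omega
        · have hside := side_of_reachable hn ends lp pos hends E' hr j' hj'
          have hj'lt := j'.isLt
          rw [hv] at hside
          simp only [Fin.val_mk] at hside
          omega
      · have hlt : j'.val < j.val := by
          rcases Nat.lt_or_ge j'.val j.val with h | h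
          · exact h
          · exact absurd (Fin.ext (by omega)) hne
        set v : Fin n := ⟨j'.val + 1, by have := j'.isLt; omega⟩ with hv
        rcases hall v with hr | hr
        · have hside := side_of_reachable hn ends lp pos hends E' hr j' hj'
          rw [hv] at hside
          simp only [Fin.val_mk] at hside
          omega
        · have hside := side_of_reachable hn ends lp pos hends E' hr j hjm
          have hjlt := j.isLt
          rw [hv] at hside
          simp only [Fin.val_mk] at hside
          omega
    ext i
    simp only [Finset.mem_erase, Finset.mem_univ, and_true]
    constructor
    · intro hi
      intro hij
      rw [hij] at hi
      exact hjm hi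
    · intro hij
      by_contra hc
      exact hij (huniq i hc)
  · rintro ⟨j, hj⟩
    have hjm : j ∉ E'.image pos := by rw [hj]; simp
    constructor
    · intro hr
      have hside := side_of_reachable hn ends lp pos hends E' hr j hjm
      have hjlt := j.isLt
      simp only [Fin.val_mk] at hside
      omega
    · intro v
      rcases le_or_gt v.val j.val with hle | hlt
      · left
        apply SimpleGraph.Reachable.symm
        apply reachable_of_covered hn ends lp pos hends E' (v.val - 0) _ _ rfl (by simp)
        intro i h1 h2
        rw [hj]
        simp only [Finset.mem_erase, Finset.mem_univ, and_true]
        intro hc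
        rw [hc] at h2
        omega
      · right
        apply reachable_of_covered hn ends lp pos hends E' (n - 1 - v.val) _ _ rfl
          (by simp; omega)
        intro i h1 h2
        rw [hj]
        simp only [Finset.mem_erase, Finset.mem_univ, and_true]
        intro hc
        rw [hc] at h1
        omega


lemma card_sections (pos : Fin m → Fin (n - 1)) (σ : Finset (Fin (n - 1))) :
    (Finset.univ.filter fun E' : Finset (Fin m) =>
        E'.card = σ.card ∧ E'.image pos = σ).card
      = ∏ i ∈ σ, (Finset.univ.filter fun e : Fin m => pos e = i).card := by
  rw [← Finset.card_pi]
  symm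
  apply Finset.card_bij (fun p _ => σ.attach.image (fun i => p i.1 i.2))
  · -- membership
    intro p hp
    rw [Finset.mem_pi] at hp
    have hpos : ∀ (i : Fin (n - 1)) (hi : i ∈ σ), pos (p i hi) = i := by
      intro i hi
      have := hp i hi
      simpa using this
    have hinj : Set.InjOn (fun i : {x // x ∈ σ} => p i.1 i.2) σ.attach := by
      intro a _ b _ hab
      have : pos (p a.1 a.2) = pos (p b.1 b.2) := congrArg pos hab
      rw [hpos a.1 a.2, hpos b.1 b.2] at this
      exact Subtype.ext this
    rw [Finset.mem_filter]
    refine ⟨Finset.mem_univ _, ?_, ?_⟩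
    · rw [Finset.card_image_of_injOn hinj, Finset.card_attach]
    · rw [Finset.image_image]
      have : (pos ∘ fun i : {x // x ∈ σ} => p i.1 i.2) = fun i => i.1 := by
        funext i; exact hpos i.1 i.2
      rw [this, Finset.attach_image_val]
  · -- injective
    intro p hp q hq hpq
    rw [Finset.mem_pi] at hp hq
    have hpos : ∀ (i : Fin (n - 1)) (hi : i ∈ σ), pos (p i hi) = i := by
      intro i hi; have := hp i hi; simpa using this
    have hqos : ∀ (i : Fin (n - 1)) (hi : i ∈ σ), pos (q i hi) = i := by
      intro i hi; have := hq i hi; simpa using this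
    funext i hi
    have hmem : p i hi ∈ σ.attach.image (fun i : {x // x ∈ σ} => q i.1 i.2) := by
      rw [← hpq]
      exact Finset.mem_image.mpr ⟨⟨i, hi⟩, Finset.mem_attach _ _, rfl⟩
    obtain ⟨a, _, ha⟩ := Finset.mem_image.mp hmem
    have hai : a.1 = i := by
      have := congrArg pos ha
      rw [hqos a.1 a.2, hpos i hi] at this
      exact this
    rcases a with ⟨a, haσ⟩
    cases hai
    exact ha.symm
  · -- surjective
    intro E' hE'
    rw [Finset.mem_filter] at hE'
    obtain ⟨-, hcard, himg⟩ := hE'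
    have hfib : ∀ i ∈ σ, ∃ e, e ∈ E' ∧ pos e = i := by
      intro i hi
      rw [← himg] at hi
      obtain ⟨e, he, hpe⟩ := Finset.mem_image.mp hi
      exact ⟨e, he, hpe⟩
    classical
    refine ⟨fun i hi => (hfib i hi).choose, ?_, ?_⟩
    · rw [Finset.mem_pi]
      intro i hi
      simp only [Finset.mem_filter, Finset.mem_univ, true_and]
      exact (hfib i hi).choose_spec.2
    · -- image equals E'
      apply Finset.eq_of_subset_of_card_le
      · intro x hx
        obtain ⟨a, -, ha⟩ := Finset.mem_image.mp hx
        rw [← ha]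
        exact (hfib a.1 a.2).choose_spec.1
      · rw [hcard]
        have hinj : Set.InjOn (fun i : {x // x ∈ σ} => (hfib i.1 i.2).choose) σ.attach := by
          intro a _ b _ hab
          have h2 : pos (hfib a.1 a.2).choose = pos (hfib b.1 b.2).choose := congrArg pos hab
          rw [(hfib a.1 a.2).choose_spec.2, (hfib b.1 b.2).choose_spec.2] at h2
          exact Subtype.ext h2
        rw [Finset.card_image_of_injOn hinj, Finset.card_attach]


lemma Nst_eq (hn : 2 ≤ n)
    (ends : Fin m → Sym2 (Fin n)) (lp : ∀ e, ¬ (ends e).IsDiag)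
    (pos : Fin m → Fin (n - 1))
    (hends : ∀ e : Fin m, ends e =
      s((⟨(pos e).val, by have := (pos e).isLt; omega⟩ : Fin n),
        (⟨(pos e).val + 1, by have := (pos e).isLt; omega⟩ : Fin n))) :
    (Multigraph.mk (Fin n) (Fin m) ends lp).Nst
        (⟨0, by omega⟩ : Fin n) (⟨n - 1, by omega⟩ : Fin n) (n - 2)
      = ∑ j : Fin (n - 1), ∏ i ∈ Finset.univ.erase j,
          (Finset.univ.filter fun e : Fin m => pos e = i).card := by
  classical
  have hec : ∀ j : Fin (n - 1), ((Finset.univ : Finset (Fin (n - 1))).erase j).card = n - 2 := by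
    intro j
    rw [Finset.card_erase_of_mem (Finset.mem_univ _), Finset.card_univ, Fintype.card_fin]
    omega
  rw [Multigraph.Nst]
  have hunion : (Finset.univ.filter fun E' : Finset (Fin m) =>
        E'.card = n - 2 ∧ (Multigraph.mk (Fin n) (Fin m) ends lp).SplitState
          (⟨0, by omega⟩ : Fin n) (⟨n - 1, by omega⟩ : Fin n) E')
      = Finset.univ.biUnion (fun j : Fin (n - 1) =>
          Finset.univ.filter fun E' : Finset (Fin m) =>
            E'.card = ((Finset.univ : Finset (Fin (n - 1))).erase j).card ∧
              E'.image pos = (Finset.univ : Finset (Fin (n - 1))).erase j) := by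
    ext E'
    simp only [Finset.mem_filter, Finset.mem_biUnion, Finset.mem_univ, true_and]
    rw [splitState_iff hn ends lp pos hends E']
    constructor
    · rintro ⟨hc, j, hj⟩
      exact ⟨j, by rw [hec]; exact hc, hj⟩
    · rintro ⟨j, hc, hj⟩
      rw [hec j] at hc
      exact ⟨hc, j, hj⟩
  have hdisj : ∀ j₁ ∈ (Finset.univ : Finset (Fin (n - 1))), ∀ j₂ ∈ (Finset.univ : Finset (Fin (n - 1))),
      j₁ ≠ j₂ → Disjoint
        (Finset.univ.filter fun E' : Finset (Fin m) =>
          E'.card = ((Finset.univ : Finset (Fin (n - 1))).erase j₁).card ∧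
            E'.image pos = (Finset.univ : Finset (Fin (n - 1))).erase j₁)
        (Finset.univ.filter fun E' : Finset (Fin m) =>
          E'.card = ((Finset.univ : Finset (Fin (n - 1))).erase j₂).card ∧
            E'.image pos = (Finset.univ : Finset (Fin (n - 1))).erase j₂) := by
    intro j₁ _ j₂ _ hne
    rw [Finset.disjoint_left]
    intro E' h1 h2
    rw [Finset.mem_filter] at h1 h2
    have he : (Finset.univ : Finset (Fin (n - 1))).erase j₁
        = (Finset.univ : Finset (Fin (n - 1))).erase j₂ := by
      rw [← h1.2.2, ← h2.2.2]
    have hmem : j₁ ∈ (Finset.univ : Finset (Fin (n - 1))).erase j₂ :=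
      Finset.mem_erase.mpr ⟨hne, Finset.mem_univ _⟩
    rw [← he] at hmem
    exact absurd rfl (Finset.mem_erase.mp hmem).1
  rw [hunion, Finset.card_biUnion hdisj]
  exact Finset.sum_congr rfl fun j _ => card_sections pos _


lemma sum_prod_one_bump {N : ℕ} (f : Fin N → ℕ) (K : Fin N)
    (hf : ∀ i, i ≠ K → f i = 1) :
    ∑ j : Fin N, ∏ i ∈ Finset.univ.erase j, f i = 1 + (N - 1) * f K := by
  have hg : ∀ j : Fin N, j ≠ K → ∏ i ∈ Finset.univ.erase j, f i = f K := by
    intro j hj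
    apply Finset.prod_eq_single_of_mem
    · exact Finset.mem_erase.mpr ⟨hj.symm, Finset.mem_univ _⟩
    · intro b _ hb
      exact hf b hb
  have hK : ∏ i ∈ Finset.univ.erase K, f i = 1 := by
    apply Finset.prod_eq_one
    intro i hi
    exact hf i (Finset.mem_erase.mp hi).1
  rw [← Finset.sum_erase_add _ _ (Finset.mem_univ K), hK]
  have : ∑ j ∈ Finset.univ.erase K, ∏ i ∈ Finset.univ.erase j, f i
      = ∑ j ∈ Finset.univ.erase K, f K := by
    apply Finset.sum_congr rfl
    intro j hj
    exact hg j (Finset.mem_erase.mp hj).1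
  rw [this, Finset.sum_const, Finset.card_erase_of_mem (Finset.mem_univ _),
    Finset.card_univ, Fintype.card_fin, smul_eq_mul]
  omega

lemma sum_prod_two_bump {N : ℕ} (f : Fin N → ℕ) (K₁ K₂ : Fin N) (hK : K₁ ≠ K₂)
    (hf : ∀ i, i ≠ K₁ → i ≠ K₂ → f i = 1) :
    ∑ j : Fin N, ∏ i ∈ Finset.univ.erase j, f i
      = f K₂ + f K₁ + (N - 2) * (f K₁ * f K₂) := by
  have hg1 : ∏ i ∈ Finset.univ.erase K₁, f i = f K₂ := by
    apply Finset.prod_eq_single_of_mem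
    · exact Finset.mem_erase.mpr ⟨hK.symm, Finset.mem_univ _⟩
    · intro b hb hb2
      exact hf b (Finset.mem_erase.mp hb).1 hb2
  have hg2 : ∏ i ∈ Finset.univ.erase K₂, f i = f K₁ := by
    apply Finset.prod_eq_single_of_mem
    · exact Finset.mem_erase.mpr ⟨hK, Finset.mem_univ _⟩
    · intro b hb hb2
      exact hf b hb2 (Finset.mem_erase.mp hb).1
  have hg : ∀ j : Fin N, j ≠ K₁ → j ≠ K₂ →
      ∏ i ∈ Finset.univ.erase j, f i = f K₁ * f K₂ := by
    intro j hj1 hj2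
    have hm1 : K₁ ∈ Finset.univ.erase j := Finset.mem_erase.mpr ⟨hj1.symm, Finset.mem_univ _⟩
    have hm2 : K₂ ∈ (Finset.univ.erase j).erase K₁ :=
      Finset.mem_erase.mpr ⟨hK.symm, Finset.mem_erase.mpr ⟨hj2.symm, Finset.mem_univ _⟩⟩
    rw [← Finset.mul_prod_erase _ f hm1, ← Finset.mul_prod_erase _ f hm2]
    have : ∏ i ∈ ((Finset.univ.erase j).erase K₁).erase K₂, f i = 1 := by
      apply Finset.prod_eq_one
      intro i hi
      have h2 := Finset.mem_erase.mp hi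
      have h1 := Finset.mem_erase.mp h2.2
      exact hf i h1.1 h2.1
    rw [this, mul_one]
  have hm1 : K₁ ∈ (Finset.univ : Finset (Fin N)) := Finset.mem_univ _
  have hm2 : K₂ ∈ (Finset.univ : Finset (Fin N)).erase K₁ :=
    Finset.mem_erase.mpr ⟨hK.symm, Finset.mem_univ _⟩
  rw [← Finset.sum_erase_add _ _ hm1, ← Finset.sum_erase_add _ _ hm2, hg1, hg2]
  have hconst : ∑ j ∈ ((Finset.univ : Finset (Fin N)).erase K₁).erase K₂,
      ∏ i ∈ Finset.univ.erase j, f i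
      = ∑ j ∈ ((Finset.univ : Finset (Fin N)).erase K₁).erase K₂, f K₁ * f K₂ := by
    apply Finset.sum_congr rfl
    intro j hj
    have h2 := Finset.mem_erase.mp hj
    have h1 := Finset.mem_erase.mp h2.2
    exact hg j h1.1 h2.1
  rw [hconst, Finset.sum_const, smul_eq_mul,
    Finset.card_erase_of_mem hm2, Finset.card_erase_of_mem (Finset.mem_univ _),
    Finset.card_univ, Fintype.card_fin]
  have : N - 1 - 1 = N - 2 := by omega
  rw [this]
  ring

lemma filter_val_eq_card {m a : ℕ} (ha : a < m) :
    ((Finset.univ : Finset (Fin m)).filter fun e => e.val = a).card = 1 := by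
  rw [Finset.card_eq_one]
  refine ⟨⟨a, ha⟩, ?_⟩
  ext e
  simp [Fin.ext_iff]

lemma filter_val_ge_card {m c : ℕ} :
    ((Finset.univ : Finset (Fin m)).filter fun e => c ≤ e.val).card = m - c := by
  have himg : ((Finset.univ : Finset (Fin m)).filter fun e => c ≤ e.val).image Fin.val
      = Finset.Ico c m := by
    ext x
    simp only [Finset.mem_image, Finset.mem_filter, Finset.mem_univ, true_and, Finset.mem_Ico]
    constructor
    · rintro ⟨e, hc, rfl⟩; exact ⟨hc, e.isLt⟩
    · rintro ⟨h1, h2⟩; exact ⟨⟨x, h2⟩, h1, rfl⟩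
  rw [← Nat.card_Ico c m, ← himg, Finset.card_image_of_injective _ Fin.val_injective]


lemma Nst_Gnm_val (n m k : ℕ) (hn : 4 ≤ n) (hm : n < m) (hk : k < n - 1) :
    (Multigraph.Gnm n m k hk).Nst
        (⟨0, by omega⟩ : Fin n) (⟨n - 1, by omega⟩ : Fin n) (n - 2)
      = 1 + (n - 2) * (m - n + 2) := by
  have hn2 : 2 ≤ n := by omega
  set pos : Fin m → Fin (n - 1) :=
    fun e => if h : e.val < n - 1 then ⟨e.val, h⟩ else ⟨k, hk⟩ with hpos
  have hends : ∀ e : Fin m, (Multigraph.Gnm n m k hk).ends e =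
      s((⟨(pos e).val, by have := (pos e).isLt; omega⟩ : Fin n),
        (⟨(pos e).val + 1, by have := (pos e).isLt; omega⟩ : Fin n)) := by
    intro e
    by_cases h : e.val < n - 1
    · simp only [Multigraph.Gnm, hpos, dif_pos h]
    · simp only [Multigraph.Gnm, hpos, dif_neg h]
  have hfK : ((Finset.univ : Finset (Fin m)).filter
      fun e => pos e = ⟨k, hk⟩).card = m - n + 2 := by
    have hset : ((Finset.univ : Finset (Fin m)).filter fun e => pos e = ⟨k, hk⟩)
        = (Finset.univ : Finset (Fin m)).filter fun e => e.val = k ∨ n - 1 ≤ e.val := by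
      apply Finset.filter_congr
      intro e _
      simp only [hpos]
      by_cases h : e.val < n - 1
      · rw [dif_pos h]
        simp only [Fin.mk.injEq]
        omega
      · rw [dif_neg h]
        exact iff_of_true rfl (Or.inr (by omega))
    have hdisj : Disjoint ((Finset.univ : Finset (Fin m)).filter fun e => e.val = k)
        ((Finset.univ : Finset (Fin m)).filter fun e => n - 1 ≤ e.val) := by
      rw [Finset.disjoint_left]
      intro e he1 he2
      rw [Finset.mem_filter] at he1 he2
      omega
    rw [hset, Finset.filter_or, Finset.card_union_of_disjoint hdisj,
      filter_val_eq_card (by omega : k < m), filter_val_ge_card]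
    omega
  have hf1 : ∀ i : Fin (n - 1), i ≠ ⟨k, hk⟩ →
      ((Finset.univ : Finset (Fin m)).filter fun e => pos e = i).card = 1 := by
    intro i hi
    have hiv : i.val ≠ k := by
      intro hc; exact hi (Fin.ext hc)
    have hilt := i.isLt
    have hset : ((Finset.univ : Finset (Fin m)).filter fun e => pos e = i)
        = (Finset.univ : Finset (Fin m)).filter fun e => e.val = i.val := by
      apply Finset.filter_congr
      intro e _
      simp only [hpos]
      by_cases h : e.val < n - 1
      · rw [dif_pos h]
        rw [Fin.ext_iff]
      · rw [dif_neg h]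
        rw [Fin.ext_iff]
        simp only [Fin.val_mk]
        omega
    rw [hset, filter_val_eq_card (by omega : i.val < m)]
  calc (Multigraph.Gnm n m k hk).Nst
        (⟨0, by omega⟩ : Fin n) (⟨n - 1, by omega⟩ : Fin n) (n - 2)
      = ∑ j : Fin (n - 1), ∏ i ∈ Finset.univ.erase j,
          ((Finset.univ : Finset (Fin m)).filter fun e => pos e = i).card :=
        Nst_eq hn2 (Multigraph.Gnm n m k hk).ends (Multigraph.Gnm n m k hk).loopless pos hends
    _ = 1 + (n - 2) * (m - n + 2) := by
        rw [sum_prod_one_bump _ ⟨k, hk⟩ hf1, hfK]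
        have h2 : n - 1 - 1 = n - 2 := by omega
        rw [h2]


lemma Nst_Gnm2_val (n m k₁ k₂ : ℕ) (hn : 4 ≤ n) (hm : n < m)
    (hk₁ : k₁ < n - 1) (hk₂ : k₂ < n - 1) (hne : k₁ ≠ k₂) :
    (Multigraph.Gnm2 n m k₁ k₂ hk₁ hk₂).Nst
        (⟨0, by omega⟩ : Fin n) (⟨n - 1, by omega⟩ : Fin n) (n - 2)
      = 2 * (m - n + 1) * (n - 3) + 2 + (m - n + 1) := by
  have hn2 : 2 ≤ n := by omega
  set pos : Fin m → Fin (n - 1) :=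
    fun e => if h : e.val < n - 1 then ⟨e.val, h⟩
      else if e.val = n - 1 then ⟨k₁, hk₁⟩ else ⟨k₂, hk₂⟩ with hpos
  have hends : ∀ e : Fin m, (Multigraph.Gnm2 n m k₁ k₂ hk₁ hk₂).ends e =
      s((⟨(pos e).val, by have := (pos e).isLt; omega⟩ : Fin n),
        (⟨(pos e).val + 1, by have := (pos e).isLt; omega⟩ : Fin n)) := by
    intro e
    by_cases h : e.val < n - 1
    · simp only [Multigraph.Gnm2, hpos, dif_pos h]
    · by_cases h' : e.val = n - 1
      · simp only [Multigraph.Gnm2, hpos, dif_neg h, if_pos h']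
      · simp only [Multigraph.Gnm2, hpos, dif_neg h, if_neg h']
  have hfK1 : ((Finset.univ : Finset (Fin m)).filter
      fun e => pos e = ⟨k₁, hk₁⟩).card = 2 := by
    have hset : ((Finset.univ : Finset (Fin m)).filter fun e => pos e = ⟨k₁, hk₁⟩)
        = (Finset.univ : Finset (Fin m)).filter fun e => e.val = k₁ ∨ e.val = n - 1 := by
      apply Finset.filter_congr
      intro e _
      simp only [hpos]
      by_cases h : e.val < n - 1
      · rw [dif_pos h]
        simp only [Fin.mk.injEq]
        omega
      · by_cases h' : e.val = n - 1
        · rw [dif_neg h, if_pos h']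
          exact iff_of_true rfl (Or.inr h')
        · rw [dif_neg h, if_neg h']
          simp only [Fin.mk.injEq]
          omega
    have hdisj : Disjoint ((Finset.univ : Finset (Fin m)).filter fun e => e.val = k₁)
        ((Finset.univ : Finset (Fin m)).filter fun e => e.val = n - 1) := by
      rw [Finset.disjoint_left]
      intro e he1 he2
      rw [Finset.mem_filter] at he1 he2
      omega
    rw [hset, Finset.filter_or, Finset.card_union_of_disjoint hdisj,
      filter_val_eq_card (by omega : k₁ < m), filter_val_eq_card (by omega : n - 1 < m)]
  have hfK2 : ((Finset.univ : Finset (Fin m)).filter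
      fun e => pos e = ⟨k₂, hk₂⟩).card = m - n + 1 := by
    have hset : ((Finset.univ : Finset (Fin m)).filter fun e => pos e = ⟨k₂, hk₂⟩)
        = (Finset.univ : Finset (Fin m)).filter fun e => e.val = k₂ ∨ n ≤ e.val := by
      apply Finset.filter_congr
      intro e _
      simp only [hpos]
      by_cases h : e.val < n - 1
      · rw [dif_pos h]
        simp only [Fin.mk.injEq]
        omega
      · by_cases h' : e.val = n - 1
        · rw [dif_neg h, if_pos h']
          simp only [Fin.mk.injEq]
          omega
        · rw [dif_neg h, if_neg h']
          exact iff_of_true rfl (Or.inr (by omega))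
    have hdisj : Disjoint ((Finset.univ : Finset (Fin m)).filter fun e => e.val = k₂)
        ((Finset.univ : Finset (Fin m)).filter fun e => n ≤ e.val) := by
      rw [Finset.disjoint_left]
      intro e he1 he2
      rw [Finset.mem_filter] at he1 he2
      omega
    rw [hset, Finset.filter_or, Finset.card_union_of_disjoint hdisj,
      filter_val_eq_card (by omega : k₂ < m), filter_val_ge_card]
    omega
  have hf1 : ∀ i : Fin (n - 1), i ≠ ⟨k₁, hk₁⟩ → i ≠ ⟨k₂, hk₂⟩ →
      ((Finset.univ : Finset (Fin m)).filter fun e => pos e = i).card = 1 := by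
    intro i hi1 hi2
    have hiv1 : i.val ≠ k₁ := by intro hc; exact hi1 (Fin.ext hc)
    have hiv2 : i.val ≠ k₂ := by intro hc; exact hi2 (Fin.ext hc)
    have hilt := i.isLt
    have hset : ((Finset.univ : Finset (Fin m)).filter fun e => pos e = i)
        = (Finset.univ : Finset (Fin m)).filter fun e => e.val = i.val := by
      apply Finset.filter_congr
      intro e _
      simp only [hpos]
      by_cases h : e.val < n - 1
      · rw [dif_pos h]
        rw [Fin.ext_iff]
      · by_cases h' : e.val = n - 1
        · rw [dif_neg h, if_pos h']
          rw [Fin.ext_iff]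
          simp only [Fin.val_mk]
          omega
        · rw [dif_neg h, if_neg h']
          rw [Fin.ext_iff]
          simp only [Fin.val_mk]
          omega
    rw [hset, filter_val_eq_card (by omega : i.val < m)]
  have hKne : (⟨k₁, hk₁⟩ : Fin (n - 1)) ≠ ⟨k₂, hk₂⟩ := by
    intro hc
    exact hne (by simpa [Fin.ext_iff] using hc)
  calc (Multigraph.Gnm2 n m k₁ k₂ hk₁ hk₂).Nst
        (⟨0, by omega⟩ : Fin n) (⟨n - 1, by omega⟩ : Fin n) (n - 2)
      = ∑ j : Fin (n - 1), ∏ i ∈ Finset.univ.erase j,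
          ((Finset.univ : Finset (Fin m)).filter fun e => pos e = i).card :=
        Nst_eq hn2 (Multigraph.Gnm2 n m k₁ k₂ hk₁ hk₂).ends
          (Multigraph.Gnm2 n m k₁ k₂ hk₁ hk₂).loopless pos hends
    _ = 2 * (m - n + 1) * (n - 3) + 2 + (m - n + 1) := by
        rw [sum_prod_two_bump _ ⟨k₁, hk₁⟩ ⟨k₂, hk₂⟩ hKne hf1, hfK1, hfK2]
        have h2 : n - 1 - 2 = n - 3 := by omega
        rw [h2]
        ring

end SplitAux

/-- For `m > n ≥ 4`, the graph `H` obtained from a path of length `n-1`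
between `s` and `t` by replacing one path edge by a bundle of `2` parallel edges and a
different path edge by a bundle of `m-n+1` parallel edges satisfies
`N_{n-2}(H,s,t) = 2(m-n+1)(n-3) + 2 + (m-n+1)`, which exceeds `1+(n-2)(m-n+2)` iff
`(m-n)(n-3) > 0`; in particular `N_{n-2}(H,s,t) > N_{n-2}(G_{n,m},s,t)`. -/
theorem Nst_Gnm2 (n m : ℕ) (hn : 4 ≤ n) (hm : n < m)
    (k₁ k₂ : ℕ) (hk₁ : k₁ < n - 1) (hk₂ : k₂ < n - 1) (hne : k₁ ≠ k₂) :
    (Multigraph.Gnm2 n m k₁ k₂ hk₁ hk₂).Nst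
        (⟨0, by omega⟩ : Fin n) (⟨n - 1, by omega⟩ : Fin n) (n - 2) =
      2 * (m - n + 1) * (n - 3) + 2 + (m - n + 1) ∧
    (2 * (m - n + 1) * (n - 3) + 2 + (m - n + 1) > 1 + (n - 2) * (m - n + 2) ↔
      (m - n) * (n - 3) > 0) ∧
    (∀ (k : ℕ) (hk : k < n - 1),
      (Multigraph.Gnm n m k hk).Nst
          (⟨0, by omega⟩ : Fin n) (⟨n - 1, by omega⟩ : Fin n) (n - 2) <
        (Multigraph.Gnm2 n m k₁ k₂ hk₁ hk₂).Nst
          (⟨0, by omega⟩ : Fin n) (⟨n - 1, by omega⟩ : Fin n) (n - 2)) := by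
  have h1 := SplitAux.Nst_Gnm2_val n m k₁ k₂ hn hm hk₁ hk₂ hne
  have hkey : 2 * (m - n + 1) * (n - 3) + 2 + (m - n + 1) > 1 + (n - 2) * (m - n + 2) := by
    have ha : 1 ≤ m - n := by omega
    have hb : 1 ≤ n - 3 := by omega
    have e3 : n - 2 = (n - 3) + 1 := by omega
    rw [e3]
    set a := m - n with hadef
    set b := n - 3 with hbdef
    nlinarith [Nat.mul_le_mul ha hb]
  refine ⟨h1, iff_of_true hkey (Nat.mul_pos (by omega) (by omega)), ?_⟩
  intro k hk
  calc (Multigraph.Gnm n m k hk).Nst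
        (⟨0, by omega⟩ : Fin n) (⟨n - 1, by omega⟩ : Fin n) (n - 2)
      = 1 + (n - 2) * (m - n + 2) := SplitAux.Nst_Gnm_val n m k hn hm hk
    _ < 2 * (m - n + 1) * (n - 3) + 2 + (m - n + 1) := hkey
    _ = (Multigraph.Gnm2 n m k₁ k₂ hk₁ hk₂).Nst
          (⟨0, by omega⟩ : Fin n) (⟨n - 1, by omega⟩ : Fin n) (n - 2) := h1.symm
end

section
/- Let n ≥ 7 and let H be the simple graph on n vertices obtained from a path s=u_0, u_1, …, u_{n-3}=t of length n-3 together with two additional vertices w_1, w_2 forming a triangle with t (i.e., edges t–w_1, w_1–w_2, w_2–t), so that H has n vertices and n edges. Then N_{n-2}(H,s,t) = 3(n-3), and 3(n-3) > 1 + 2(n-2) = N_{n-2}(G_{n,n},s,t). -/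
namespace Multigraph

lemma adj_of_edge (G : Multigraph) (E' : Finset G.E) {e : G.E} (he : e ∈ E')
    {u v : G.V} (h : G.ends e = s(u, v)) : (G.subgraph E').Adj u v := by
  refine ⟨?_, e, he, h⟩
  intro huv
  subst huv
  exact G.loopless e (by rw [h]; exact Sym2.mk_isDiag_iff.mpr rfl)

lemma invariant_of_reach (G : Multigraph) (E' : Finset G.E) (P : G.V → Prop)
    (h : ∀ e ∈ E', ∀ u v : G.V, G.ends e = s(u, v) → (P u ↔ P v))
    {a b : G.V} (hr : (G.subgraph E').Reachable a b) : P a ↔ P b := by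
  obtain ⟨w⟩ := hr
  induction w with
  | nil => exact Iff.rfl
  | cons h' p ih =>
      obtain ⟨hne, e, he, hends⟩ := h'
      exact (h e he _ _ hends).trans ih

lemma reach_chain (G : Multigraph) (E' : Finset G.E) (f : ℕ → G.V) (a b : ℕ) (hab : a ≤ b)
    (h : ∀ j, a ≤ j → j < b → (G.subgraph E').Adj (f j) (f (j + 1))) :
    (G.subgraph E').Reachable (f a) (f b) := by
  induction b, hab using Nat.le_induction with
  | base => exact SimpleGraph.Reachable.refl _
  | succ b hb ih =>
      exact (ih (fun j hj hj' => h j hj (by omega))).trans (h b hb (by omega)).reachable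

end Multigraph
namespace Multigraph

section Tri
variable {n : ℕ} (h4 : 4 ≤ n)

lemma tri_ends_lt (e : Fin n) (h : e.val < n - 3) :
    (triGraph n h4).ends e
      = s((⟨e.val, by omega⟩ : Fin n), (⟨e.val + 1, by omega⟩ : Fin n)) := by
  simp only [triGraph, dif_pos h]

lemma tri_ends_a (e : Fin n) (h : e.val = n - 3) :
    (triGraph n h4).ends e
      = s((⟨n - 3, by omega⟩ : Fin n), (⟨n - 2, by omega⟩ : Fin n)) := by
  simp only [triGraph, dif_neg (by omega : ¬ e.val < n - 3), if_pos h]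

lemma tri_ends_b (e : Fin n) (h : e.val = n - 2) :
    (triGraph n h4).ends e
      = s((⟨n - 2, by omega⟩ : Fin n), (⟨n - 1, by omega⟩ : Fin n)) := by
  simp only [triGraph, dif_neg (by omega : ¬ e.val < n - 3),
    if_neg (by omega : ¬ e.val = n - 3), if_pos h]

lemma tri_ends_c (e : Fin n) (h : e.val = n - 1) :
    (triGraph n h4).ends e
      = s((⟨n - 1, by omega⟩ : Fin n), (⟨n - 3, by omega⟩ : Fin n)) := by
  have := e.isLt
  simp only [triGraph, dif_neg (by omega : ¬ e.val < n - 3),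
    if_neg (by omega : ¬ e.val = n - 3), if_neg (by omega : ¬ e.val = n - 2)]

end Tri

section GnmL
variable {n m k : ℕ} (hk : k < n - 1)

lemma gnm_ends_lt (e : Fin m) (h : e.val < n - 1) :
    (Gnm n m k hk).ends e
      = s((⟨e.val, by omega⟩ : Fin n), (⟨e.val + 1, by omega⟩ : Fin n)) := by
  simp only [Gnm, dif_pos h]

lemma gnm_ends_ge (e : Fin m) (h : ¬ e.val < n - 1) :
    (Gnm n m k hk).ends e
      = s((⟨k, by omega⟩ : Fin n), (⟨k + 1, by omega⟩ : Fin n)) := by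
  simp only [Gnm, dif_neg h]

end GnmL

end Multigraph
namespace Multigraph

variable {n : ℕ}

lemma tri_ends_vals (h4 : 4 ≤ n) (e : Fin n) {u v : Fin n}
    (h : (triGraph n h4).ends e = s(u, v)) :
    (e.val < n - 3 ∧ (u.val = e.val ∧ v.val = e.val + 1 ∨ u.val = e.val + 1 ∧ v.val = e.val)) ∨
    (e.val = n - 3 ∧ (u.val = n - 3 ∧ v.val = n - 2 ∨ u.val = n - 2 ∧ v.val = n - 3)) ∨
    (e.val = n - 2 ∧ (u.val = n - 2 ∧ v.val = n - 1 ∨ u.val = n - 1 ∧ v.val = n - 2)) ∨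
    (e.val = n - 1 ∧ (u.val = n - 1 ∧ v.val = n - 3 ∨ u.val = n - 3 ∧ v.val = n - 1)) := by
  have hlt := e.isLt
  rcases Nat.lt_or_ge e.val (n - 3) with hc | hc
  · rw [tri_ends_lt h4 e hc] at h
    rcases Sym2.eq_iff.mp h with ⟨h1, h2⟩ | ⟨h1, h2⟩
    · exact Or.inl ⟨hc, Or.inl ⟨by rw [← h1], by rw [← h2]⟩⟩
    · exact Or.inl ⟨hc, Or.inr ⟨by rw [← h2], by rw [← h1]⟩⟩
  · rcases Nat.lt_or_ge e.val (n - 2) with hc2 | hc2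
    · have he : e.val = n - 3 := by omega
      rw [tri_ends_a h4 e he] at h
      rcases Sym2.eq_iff.mp h with ⟨h1, h2⟩ | ⟨h1, h2⟩
      · exact Or.inr (Or.inl ⟨he, Or.inl ⟨by rw [← h1], by rw [← h2]⟩⟩)
      · exact Or.inr (Or.inl ⟨he, Or.inr ⟨by rw [← h2], by rw [← h1]⟩⟩)
    · rcases Nat.lt_or_ge e.val (n - 1) with hc3 | hc3
      · have he : e.val = n - 2 := by omega
        rw [tri_ends_b h4 e he] at h
        rcases Sym2.eq_iff.mp h with ⟨h1, h2⟩ | ⟨h1, h2⟩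
        · exact Or.inr (Or.inr (Or.inl ⟨he, Or.inl ⟨by rw [← h1], by rw [← h2]⟩⟩))
        · exact Or.inr (Or.inr (Or.inl ⟨he, Or.inr ⟨by rw [← h2], by rw [← h1]⟩⟩))
      · have he : e.val = n - 1 := by omega
        rw [tri_ends_c h4 e he] at h
        rcases Sym2.eq_iff.mp h with ⟨h1, h2⟩ | ⟨h1, h2⟩
        · exact Or.inr (Or.inr (Or.inr ⟨he, Or.inl ⟨by rw [← h1], by rw [← h2]⟩⟩))
        · exact Or.inr (Or.inr (Or.inr ⟨he, Or.inr ⟨by rw [← h2], by rw [← h1]⟩⟩))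

lemma gnm_ends_vals {m k : ℕ} (hk : k < n - 1) (e : Fin m) {u v : Fin n}
    (h : (Gnm n m k hk).ends e = s(u, v)) :
    (e.val < n - 1 ∧ (u.val = e.val ∧ v.val = e.val + 1 ∨ u.val = e.val + 1 ∧ v.val = e.val)) ∨
    (¬ e.val < n - 1 ∧ (u.val = k ∧ v.val = k + 1 ∨ u.val = k + 1 ∧ v.val = k)) := by
  rcases Nat.lt_or_ge e.val (n - 1) with hc | hc
  · rw [gnm_ends_lt hk e hc] at h
    rcases Sym2.eq_iff.mp h with ⟨h1, h2⟩ | ⟨h1, h2⟩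
    · exact Or.inl ⟨hc, Or.inl ⟨by rw [← h1], by rw [← h2]⟩⟩
    · exact Or.inl ⟨hc, Or.inr ⟨by rw [← h2], by rw [← h1]⟩⟩
  · rw [gnm_ends_ge hk e (by omega)] at h
    rcases Sym2.eq_iff.mp h with ⟨h1, h2⟩ | ⟨h1, h2⟩
    · exact Or.inr ⟨by omega, Or.inl ⟨by rw [← h1], by rw [← h2]⟩⟩
    · exact Or.inr ⟨by omega, Or.inr ⟨by rw [← h2], by rw [← h1]⟩⟩

end Multigraph
namespace Multigraph

variable {n : ℕ}

lemma tri_split (hn : 7 ≤ n) (h4 : 4 ≤ n) (i j : Fin n)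
    (hi : i.val < n - 3) (hj : n - 3 ≤ j.val) :
    (triGraph n h4).SplitState ⟨0, by omega⟩ ⟨n - 3, by omega⟩ (({i, j} : Finset (Fin n))ᶜ) := by
  set G := triGraph n h4 with hG
  set E' : Finset (Fin n) := ({i, j} : Finset (Fin n))ᶜ with hE'
  have hmem : ∀ e : Fin n, e.val ≠ i.val → e.val ≠ j.val → e ∈ E' := by
    intro e h1 h2
    simp only [hE', Finset.mem_compl, Finset.mem_insert, Finset.mem_singleton, not_or]
    exact ⟨Fin.ne_of_val_ne h1, Fin.ne_of_val_ne h2⟩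
  have hjlt := j.isLt
  let f : ℕ → Fin n := fun m => ⟨m % n, Nat.mod_lt _ (by omega)⟩
  have hfeq : ∀ m (h : m < n), f m = ⟨m, h⟩ := fun m h => Fin.ext (Nat.mod_eq_of_lt h)
  constructor
  · -- not reachable s t
    intro hr
    have hiff := invariant_of_reach G E' (fun v => v.val ≤ i.val) ?_ hr
    · simp only at hiff; omega
    · intro e he u v hends
      have hvals := tri_ends_vals h4 e hends
      have he1 : e ≠ i ∧ e ≠ j := by
        have he' : (e : Fin n) ∈ (({i, j} : Finset (Fin n))ᶜ) := he
        have he'' := Finset.mem_compl.mp he'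
        exact ⟨fun h => he'' (Finset.mem_insert.mpr (Or.inl h)),
          fun h => he'' (Finset.mem_insert.mpr (Or.inr (Finset.mem_singleton.mpr h)))⟩
      have he2 : e.val ≠ i.val := fun h => he1.1 (Fin.ext h)
      show (u : Fin n).val ≤ i.val ↔ (v : Fin n).val ≤ i.val
      rcases hvals with ⟨h1, h2 | h2⟩ | ⟨h1, h2 | h2⟩ | ⟨h1, h2 | h2⟩ | ⟨h1, h2 | h2⟩ <;> omega
  · -- every vertex reaches s or t
    intro v
    rcases Nat.lt_or_ge i.val v.val with hv | hv
    · -- v on the t side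
      right
      rcases Nat.lt_or_ge v.val (n - 2) with hv2 | hv2
      · -- i < v ≤ n - 3 : chain up to n - 3
        have hchain := reach_chain G E' f v.val (n - 3) (by omega) ?_
        · rw [hfeq v.val v.isLt, hfeq (n - 3) (by omega)] at hchain
          exact hchain
        · intro m hm hm'
          rw [hfeq m (by omega), hfeq (m + 1) (by omega)]
          exact adj_of_edge G E' (hmem ⟨m, by omega⟩ (show m ≠ i.val by omega)
              (show m ≠ j.val by omega))
            (tri_ends_lt h4 ⟨m, by omega⟩ (show m < n - 3 by omega))
      · -- v is a triangle vertex n-2 or n-1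
        rcases Nat.lt_or_ge v.val (n - 1) with hv3 | hv3
        · -- v = n - 2
          have hveq : v = ⟨n - 2, by omega⟩ := Fin.ext (show v.val = n - 2 by omega)
          rcases Nat.lt_or_ge j.val (n - 2) with hj2 | hj2
          · -- j = n-3 removed: go n-2 → n-1 → n-3
            have a1 : (G.subgraph E').Adj ⟨n - 2, by omega⟩ ⟨n - 1, by omega⟩ :=
              adj_of_edge G E' (hmem ⟨n - 2, by omega⟩ (show n - 2 ≠ i.val by omega)
                  (show n - 2 ≠ j.val by omega))
                (tri_ends_b h4 ⟨n - 2, by omega⟩ (show n - 2 = n - 2 from rfl))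
            have a2 : (G.subgraph E').Adj ⟨n - 1, by omega⟩ ⟨n - 3, by omega⟩ :=
              adj_of_edge G E' (hmem ⟨n - 1, by omega⟩ (show n - 1 ≠ i.val by omega)
                  (show n - 1 ≠ j.val by omega))
                (tri_ends_c h4 ⟨n - 1, by omega⟩ (show n - 1 = n - 1 from rfl))
            rw [hveq]
            exact a1.reachable.trans a2.reachable
          · -- direct edge n-3 : (n-3)–(n-2)
            have a1 : (G.subgraph E').Adj ⟨n - 3, by omega⟩ ⟨n - 2, by omega⟩ :=
              adj_of_edge G E' (hmem ⟨n - 3, by omega⟩ (show n - 3 ≠ i.val by omega)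
                  (show n - 3 ≠ j.val by omega))
                (tri_ends_a h4 ⟨n - 3, by omega⟩ (show n - 3 = n - 3 from rfl))
            rw [hveq]
            exact a1.symm.reachable
        · -- v = n - 1
          have hveq : v = ⟨n - 1, by omega⟩ := Fin.ext (show v.val = n - 1 by omega)
          rcases Nat.lt_or_ge j.val (n - 1) with hj2 | hj2
          · -- direct edge n-1 : (n-1)–(n-3)
            have a1 : (G.subgraph E').Adj ⟨n - 1, by omega⟩ ⟨n - 3, by omega⟩ :=
              adj_of_edge G E' (hmem ⟨n - 1, by omega⟩ (show n - 1 ≠ i.val by omega)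
                  (show n - 1 ≠ j.val by omega))
                (tri_ends_c h4 ⟨n - 1, by omega⟩ (show n - 1 = n - 1 from rfl))
            rw [hveq]
            exact a1.reachable
          · -- j = n-1 removed: go n-1 → n-2 → n-3 via edges n-2, n-3
            have a1 : (G.subgraph E').Adj ⟨n - 2, by omega⟩ ⟨n - 1, by omega⟩ :=
              adj_of_edge G E' (hmem ⟨n - 2, by omega⟩ (show n - 2 ≠ i.val by omega)
                  (show n - 2 ≠ j.val by omega))
                (tri_ends_b h4 ⟨n - 2, by omega⟩ (show n - 2 = n - 2 from rfl))
            have a2 : (G.subgraph E').Adj ⟨n - 3, by omega⟩ ⟨n - 2, by omega⟩ :=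
              adj_of_edge G E' (hmem ⟨n - 3, by omega⟩ (show n - 3 ≠ i.val by omega)
                  (show n - 3 ≠ j.val by omega))
                (tri_ends_a h4 ⟨n - 3, by omega⟩ (show n - 3 = n - 3 from rfl))
            rw [hveq]
            exact (a2.reachable.trans a1.reachable).symm
    · -- v ≤ i : chain down to 0
      left
      have hchain := reach_chain G E' f 0 v.val (Nat.zero_le _) ?_
      · rw [hfeq 0 (by omega), hfeq v.val v.isLt] at hchain
        exact hchain.symm
      · intro m hm hm'
        rw [hfeq m (by omega), hfeq (m + 1) (by omega)]
        exact adj_of_edge G E' (hmem ⟨m, by omega⟩ (show m ≠ i.val by omega)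
            (show m ≠ j.val by omega))
          (tri_ends_lt h4 ⟨m, by omega⟩ (show m < n - 3 by omega))

end Multigraph
namespace Multigraph

variable {n : ℕ}

lemma tri_split_only (hn : 7 ≤ n) (h4 : 4 ≤ n) (E' : Finset (Fin n))
    (hcard : E'.card = n - 2)
    (hs : (triGraph n h4).SplitState ⟨0, by omega⟩ ⟨n - 3, by omega⟩ E') :
    ∃ i j : Fin n, i.val < n - 3 ∧ n - 3 ≤ j.val ∧ E' = ({i, j} : Finset (Fin n))ᶜ := by
  set G := triGraph n h4 with hG
  have hcc : (E'ᶜ : Finset (Fin n)).card = 2 := by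
    rw [Finset.card_compl, hcard]
    simp only [Fintype.card_fin]
    omega
  obtain ⟨a, b, hab, hpair⟩ := Finset.card_eq_two.mp hcc
  have hE : E' = ({a, b} : Finset (Fin n))ᶜ := by rw [← hpair, compl_compl]
  have hmem : ∀ e : Fin n, e ∈ E' ↔ e ≠ a ∧ e ≠ b := by
    intro e
    rw [hE]
    simp only [Finset.mem_compl, Finset.mem_insert, Finset.mem_singleton, not_or]
  let f : ℕ → Fin n := fun m => ⟨m % n, Nat.mod_lt _ (by omega)⟩
  have hfeq : ∀ m (h : m < n), f m = ⟨m, h⟩ := fun m h => Fin.ext (Nat.mod_eq_of_lt h)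
  -- not both removed edges can be path edges
  have key : ∀ p q : ℕ, p < q → q < n - 3 →
      (∀ e : Fin n, e ∈ E' → e.val ≠ p ∧ e.val ≠ q) → False := by
    intro p q hpq hq hEpq
    have hcheck : ∀ e ∈ E', ∀ u v : Fin n, G.ends e = s(u, v) →
        ((p < u.val ∧ u.val ≤ q) ↔ (p < v.val ∧ v.val ≤ q)) := by
      intro e he u v hends
      have hvals := tri_ends_vals h4 e hends
      have h1 := hEpq e he
      rcases hvals with ⟨h2, h3 | h3⟩ | ⟨h2, h3 | h3⟩ | ⟨h2, h3 | h3⟩ | ⟨h2, h3 | h3⟩ <;> omega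
    rcases hs.2 ⟨p + 1, by omega⟩ with hr | hr
    · have := invariant_of_reach G E' (fun v => p < v.val ∧ v.val ≤ q) hcheck hr
      simp only at this
      omega
    · have := invariant_of_reach G E' (fun v => p < v.val ∧ v.val ≤ q) hcheck hr
      simp only at this
      omega
  -- not both removed edges can be triangle edges
  have key2 : ¬ (n - 3 ≤ a.val ∧ n - 3 ≤ b.val) := by
    rintro ⟨ha, hb⟩
    apply hs.1
    have hchain := reach_chain G E' f 0 (n - 3) (by omega) ?_
    · rw [hfeq 0 (by omega), hfeq (n - 3) (by omega)] at hchain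
      exact hchain
    · intro m hm hm'
      rw [hfeq m (by omega), hfeq (m + 1) (by omega)]
      refine adj_of_edge G E' ((hmem ⟨m, by omega⟩).mpr
        ⟨Fin.ne_of_val_ne (show m ≠ a.val by omega),
         Fin.ne_of_val_ne (show m ≠ b.val by omega)⟩)
        (tri_ends_lt h4 ⟨m, by omega⟩ (show m < n - 3 from hm'))
  have havb : a.val ≠ b.val := fun h => hab (Fin.ext h)
  rcases Nat.lt_or_ge a.val (n - 3) with ha | ha <;> rcases Nat.lt_or_ge b.val (n - 3) with hb | hb
  · -- both path edges: impossible
    exfalso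
    rcases Nat.lt_or_ge a.val b.val with h | h
    · exact key a.val b.val h hb fun e he => by
        have := (hmem e).mp he
        exact ⟨fun hh => this.1 (Fin.ext hh), fun hh => this.2 (Fin.ext hh)⟩
    · exact key b.val a.val (by omega) ha fun e he => by
        have := (hmem e).mp he
        exact ⟨fun hh => this.2 (Fin.ext hh), fun hh => this.1 (Fin.ext hh)⟩
  · exact ⟨a, b, ha, hb, hE⟩
  · exact ⟨b, a, hb, ha, by rw [hE, Finset.pair_comm]⟩
  · exact absurd ⟨ha, hb⟩ key2

end Multigraph
namespace Multigraph

variable {n : ℕ}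

lemma card_filter_lt_fin (n m : ℕ) (hm : m ≤ n) :
    (Finset.univ.filter fun a : Fin n => a.val < m).card = m := by
  have hemb : Function.Injective (fun i : Fin m => (⟨i.val, by omega⟩ : Fin n)) :=
    fun i j h => Fin.ext (show (i:ℕ) = j from congrArg (fun x : Fin n => x.val) h)
  rw [show (Finset.univ.filter fun a : Fin n => a.val < m)
      = Finset.map ⟨_, hemb⟩ Finset.univ from ?_]
  · rw [Finset.card_map, Finset.card_univ, Fintype.card_fin]
  · ext x
    simp only [Finset.mem_filter, Finset.mem_univ, true_and, Finset.mem_map,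
      Function.Embedding.coeFn_mk, Fin.ext_iff]
    constructor
    · intro h
      exact ⟨⟨x.val, h⟩, by simp⟩
    · rintro ⟨i, hi⟩
      have := i.isLt
      omega

lemma card_filter_ge_fin (n m : ℕ) :
    (Finset.univ.filter fun a : Fin n => m ≤ a.val).card = n - m := by
  rcases Nat.le_total m n with hm | hm
  · have : (Finset.univ.filter fun a : Fin n => m ≤ a.val)
        = (Finset.univ.filter fun a : Fin n => a.val < m)ᶜ := by
      ext x
      simp only [Finset.mem_filter, Finset.mem_univ, true_and, Finset.mem_compl]
      omega
    rw [this, Finset.card_compl, card_filter_lt_fin n m hm, Fintype.card_fin]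
  · have h0 : (Finset.univ.filter fun a : Fin n => m ≤ a.val) = ∅ := by
      ext x
      have := x.isLt
      simp only [Finset.mem_filter, Finset.mem_univ, true_and, Finset.notMem_empty,
        iff_false]
      omega
    rw [h0]
    simp
    omega

lemma tri_Nst (hn : 7 ≤ n) (h4 : 4 ≤ n) :
    (triGraph n h4).Nst ⟨0, Nat.lt_of_lt_of_le (by decide) hn⟩
      ⟨n - 3, Nat.sub_lt (Nat.lt_of_lt_of_le (by decide) hn) (by decide)⟩ (n - 2) = 3 * (n - 3) := by
  classical
  set A : Finset (Fin n) := Finset.univ.filter (fun a : Fin n => a.val < n - 3) with hA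
  set B : Finset (Fin n) := Finset.univ.filter (fun a : Fin n => n - 3 ≤ a.val) with hB
  have himg : (Finset.univ.filter fun E' : Finset (Fin n) =>
      E'.card = n - 2 ∧ (triGraph n h4).SplitState ⟨0, by omega⟩ ⟨n - 3, by omega⟩ E')
      = (A ×ˢ B).image fun p : Fin n × Fin n => ({p.1, p.2} : Finset (Fin n))ᶜ := by
    ext E'
    simp only [Finset.mem_filter, Finset.mem_univ, true_and, Finset.mem_image,
      Finset.mem_product, hA, hB]
    constructor
    · rintro ⟨hc, hsp⟩
      obtain ⟨i, j, hi, hj, hEe⟩ := tri_split_only hn h4 E' hc hsp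
      exact ⟨(i, j), ⟨by simp [hi], by simp [hj]⟩, hEe.symm⟩
    · rintro ⟨⟨i, j⟩, ⟨hi, hj⟩, rfl⟩
      simp only [Finset.mem_filter, Finset.mem_univ, true_and] at hi hj
      refine ⟨?_, tri_split hn h4 i j hi hj⟩
      rw [Finset.card_compl, Finset.card_insert_of_notMem
        (by simp only [Finset.mem_singleton]; exact fun h => by rw [h] at hi; omega),
        Finset.card_singleton, Fintype.card_fin]
  have hinj : Set.InjOn (fun p : Fin n × Fin n => ({p.1, p.2} : Finset (Fin n))ᶜ)
      ((A ×ˢ B) : Finset (Fin n × Fin n)) := by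
    intro p hp q hq hpq
    simp only [Finset.coe_product, Set.mem_prod, Finset.mem_coe, hA, hB,
      Finset.mem_filter, Finset.mem_univ, true_and] at hp hq
    have hset : ({p.1, p.2} : Finset (Fin n)) = {q.1, q.2} := compl_injective hpq
    have h1 : p.1 ∈ ({q.1, q.2} : Finset (Fin n)) := by rw [← hset]; simp
    have h2 : p.2 ∈ ({q.1, q.2} : Finset (Fin n)) := by rw [← hset]; simp
    simp only [Finset.mem_insert, Finset.mem_singleton] at h1 h2
    have e1 : p.1 = q.1 := by
      rcases h1 with h | h
      · exact h
      · exfalso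
        have : p.1.val = q.2.val := by rw [h]
        omega
    have e2 : p.2 = q.2 := by
      rcases h2 with h | h
      · exfalso
        have : p.2.val = q.1.val := by rw [h]
        omega
      · exact h
    exact Prod.ext e1 e2
  unfold Nst
  trans ((A ×ˢ B).image fun p : Fin n × Fin n => ({p.1, p.2} : Finset (Fin n))ᶜ).card
  · exact congrArg Finset.card himg
  · rw [Finset.card_image_of_injOn hinj, Finset.card_product,
      card_filter_lt_fin n (n - 3) (by omega), card_filter_ge_fin n (n - 3)]
    have h3 : n - (n - 3) = 3 := by omega
    rw [h3, Nat.mul_comm]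

end Multigraph
namespace Multigraph

variable {n k : ℕ}

/-- Removing a path edge `a` together with the bundle-extra edge `n-1` splits at `a`. -/
lemma gnm_split1 (hn : 7 ≤ n) (hk : k < n - 1) (a : Fin n) (ha : a.val < n - 1) :
    (Gnm n n k hk).SplitState ⟨0, by omega⟩ ⟨n - 1, by omega⟩
      (({a, ⟨n - 1, by omega⟩} : Finset (Fin n))ᶜ) := by
  set G := Gnm n n k hk with hG
  set E' : Finset (Fin n) := ({a, ⟨n - 1, by omega⟩} : Finset (Fin n))ᶜ with hE'
  have hmem : ∀ e : Fin n, e.val ≠ a.val → e.val ≠ n - 1 → e ∈ E' := by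
    intro e h1 h2
    simp only [hE', Finset.mem_compl, Finset.mem_insert, Finset.mem_singleton, not_or]
    exact ⟨Fin.ne_of_val_ne h1, Fin.ne_of_val_ne h2⟩
  let f : ℕ → Fin n := fun m => ⟨m % n, Nat.mod_lt _ (by omega)⟩
  have hfeq : ∀ m (h : m < n), f m = ⟨m, h⟩ := fun m h => Fin.ext (Nat.mod_eq_of_lt h)
  constructor
  · intro hr
    have hiff := invariant_of_reach G E' (fun v => v.val ≤ a.val) ?_ hr
    · simp only at hiff; omega
    · intro e he u v hends
      have hvals := gnm_ends_vals hk e hends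
      have he1 : e ≠ a ∧ e ≠ ⟨n - 1, by omega⟩ := by
        have he' : (e : Fin n) ∈ (({a, ⟨n - 1, by omega⟩} : Finset (Fin n))ᶜ) := he
        have he'' := Finset.mem_compl.mp he'
        exact ⟨fun h => he'' (Finset.mem_insert.mpr (Or.inl h)),
          fun h => he'' (Finset.mem_insert.mpr (Or.inr (Finset.mem_singleton.mpr h)))⟩
      have he2 : e.val ≠ a.val := fun h => he1.1 (Fin.ext h)
      have he3 : e.val ≠ n - 1 := fun h => he1.2 (Fin.ext h)
      have := e.isLt
      show (u : Fin n).val ≤ a.val ↔ (v : Fin n).val ≤ a.val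
      rcases hvals with ⟨h1, h2 | h2⟩ | ⟨h1, h2 | h2⟩ <;> omega
  · intro v
    rcases Nat.lt_or_ge a.val v.val with hv | hv
    · right
      have hchain := reach_chain G E' f v.val (n - 1) (by omega) ?_
      · rw [hfeq v.val v.isLt, hfeq (n - 1) (by omega)] at hchain
        exact hchain
      · intro m hm hm'
        rw [hfeq m (by omega), hfeq (m + 1) (by omega)]
        exact adj_of_edge G E' (hmem ⟨m, by omega⟩ (show m ≠ a.val by omega)
            (show m ≠ n - 1 by omega))
          (gnm_ends_lt hk ⟨m, by omega⟩ (show m < n - 1 from hm'))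
    · left
      have hchain := reach_chain G E' f 0 v.val (Nat.zero_le _) ?_
      · rw [hfeq 0 (by omega), hfeq v.val v.isLt] at hchain
        exact hchain.symm
      · intro m hm hm'
        rw [hfeq m (by omega), hfeq (m + 1) (by omega)]
        exact adj_of_edge G E' (hmem ⟨m, by omega⟩ (show m ≠ a.val by omega)
            (show m ≠ n - 1 by omega))
          (gnm_ends_lt hk ⟨m, by omega⟩ (show m < n - 1 by omega))

/-- Removing a path edge `a ≠ k` together with the path edge `k` splits at `a`
(the extra bundle edge keeps `k`–`k+1` connected). -/
lemma gnm_split2 (hn : 7 ≤ n) (hk : k < n - 1) (a : Fin n) (ha : a.val < n - 1)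
    (hak : a.val ≠ k) :
    (Gnm n n k hk).SplitState ⟨0, by omega⟩ ⟨n - 1, by omega⟩
      (({a, ⟨k, by omega⟩} : Finset (Fin n))ᶜ) := by
  set G := Gnm n n k hk with hG
  set E' : Finset (Fin n) := ({a, ⟨k, by omega⟩} : Finset (Fin n))ᶜ with hE'
  have hmem : ∀ e : Fin n, e.val ≠ a.val → e.val ≠ k → e ∈ E' := by
    intro e h1 h2
    simp only [hE', Finset.mem_compl, Finset.mem_insert, Finset.mem_singleton, not_or]
    exact ⟨Fin.ne_of_val_ne h1, Fin.ne_of_val_ne h2⟩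
  let f : ℕ → Fin n := fun m => ⟨m % n, Nat.mod_lt _ (by omega)⟩
  have hfeq : ∀ m (h : m < n), f m = ⟨m, h⟩ := fun m h => Fin.ext (Nat.mod_eq_of_lt h)
  have hstep : ∀ m (hm1 : m < n - 1) (hm2 : m ≠ a.val),
      (G.subgraph E').Adj ⟨m, by omega⟩ ⟨m + 1, by omega⟩ := by
    intro m hm hma
    rcases eq_or_ne m k with hmk | hmk
    · have e1 : (⟨m, by omega⟩ : Fin n) = ⟨k, by omega⟩ := Fin.ext hmk
      have e2 : (⟨m + 1, by omega⟩ : Fin n) = ⟨k + 1, by omega⟩ := Fin.ext (show m + 1 = k + 1 by omega)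
      rw [e1, e2]
      exact adj_of_edge G E' (hmem ⟨n - 1, by omega⟩ (show n - 1 ≠ a.val by omega)
          (show n - 1 ≠ k by omega))
        (gnm_ends_ge hk ⟨n - 1, by omega⟩ (by simp))
    · exact adj_of_edge G E' (hmem ⟨m, by omega⟩ hma hmk)
        (gnm_ends_lt hk ⟨m, by omega⟩ hm)
  constructor
  · intro hr
    have hiff := invariant_of_reach G E' (fun v => v.val ≤ a.val) ?_ hr
    · simp only at hiff; omega
    · intro e he u v hends
      have hvals := gnm_ends_vals hk e hends
      have he1 : e ≠ a ∧ e ≠ ⟨k, by omega⟩ := by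
        have he' : (e : Fin n) ∈ (({a, ⟨k, by omega⟩} : Finset (Fin n))ᶜ) := he
        have he'' := Finset.mem_compl.mp he'
        exact ⟨fun h => he'' (Finset.mem_insert.mpr (Or.inl h)),
          fun h => he'' (Finset.mem_insert.mpr (Or.inr (Finset.mem_singleton.mpr h)))⟩
      have he2 : e.val ≠ a.val := fun h => he1.1 (Fin.ext h)
      have he3 : e.val ≠ k := fun h => he1.2 (Fin.ext h)
      show (u : Fin n).val ≤ a.val ↔ (v : Fin n).val ≤ a.val
      rcases hvals with ⟨h1, h2 | h2⟩ | ⟨h1, h2 | h2⟩ <;> omega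
  · intro v
    rcases Nat.lt_or_ge a.val v.val with hv | hv
    · right
      have hchain := reach_chain G E' f v.val (n - 1) (by omega) ?_
      · rw [hfeq v.val v.isLt, hfeq (n - 1) (by omega)] at hchain
        exact hchain
      · intro m hm hm'
        rw [hfeq m (by omega), hfeq (m + 1) (by omega)]
        exact hstep m (by omega) (by omega)
    · left
      have hchain := reach_chain G E' f 0 v.val (Nat.zero_le _) ?_
      · rw [hfeq 0 (by omega), hfeq v.val v.isLt] at hchain
        exact hchain.symm
      · intro m hm hm'
        rw [hfeq m (by omega), hfeq (m + 1) (by omega)]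
        exact hstep m (by omega) (by omega)

lemma gnm_split_only (hn : 7 ≤ n) (hk : k < n - 1) (E' : Finset (Fin n))
    (hcard : E'.card = n - 2)
    (hs : (Gnm n n k hk).SplitState ⟨0, by omega⟩ ⟨n - 1, by omega⟩ E') :
    ∃ c : Fin n, (c.val < n - 1 ∧ E' = ({c, ⟨n - 1, by omega⟩} : Finset (Fin n))ᶜ) ∨
      (c.val < n - 1 ∧ c.val ≠ k ∧ E' = ({c, ⟨k, by omega⟩} : Finset (Fin n))ᶜ) := by
  set G := Gnm n n k hk with hG
  have hcc : (E'ᶜ : Finset (Fin n)).card = 2 := by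
    rw [Finset.card_compl, hcard]
    simp only [Fintype.card_fin]
    omega
  obtain ⟨a, b, hab, hpair⟩ := Finset.card_eq_two.mp hcc
  have hE : E' = ({a, b} : Finset (Fin n))ᶜ := by rw [← hpair, compl_compl]
  have hmem : ∀ e : Fin n, e ∈ E' ↔ e ≠ a ∧ e ≠ b := by
    intro e
    rw [hE]
    simp only [Finset.mem_compl, Finset.mem_insert, Finset.mem_singleton, not_or]
  have key : ∀ p q : ℕ, p < q → q < n - 1 → p ≠ k → q ≠ k →
      (∀ e : Fin n, e ∈ E' → e.val ≠ p ∧ e.val ≠ q) → False := by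
    intro p q hpq hq hpk hqk hEpq
    have hcheck : ∀ e ∈ E', ∀ u v : Fin n, G.ends e = s(u, v) →
        ((p < u.val ∧ u.val ≤ q) ↔ (p < v.val ∧ v.val ≤ q)) := by
      intro e he u v hends
      have hvals := gnm_ends_vals hk e hends
      have h1 := hEpq e he
      rcases hvals with ⟨h2, h3 | h3⟩ | ⟨h2, h3 | h3⟩ <;> omega
    rcases hs.2 ⟨p + 1, by omega⟩ with hr | hr
    · have := invariant_of_reach G E' (fun v => p < v.val ∧ v.val ≤ q) hcheck hr
      simp only at this
      omega
    · have := invariant_of_reach G E' (fun v => p < v.val ∧ v.val ≤ q) hcheck hr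
      simp only at this
      omega
  have havb : a.val ≠ b.val := fun h => hab (Fin.ext h)
  have halt := a.isLt
  have hblt := b.isLt
  rcases eq_or_ne a.val (n - 1) with haL | haL
  · -- a is the extra edge; b is a path edge
    refine ⟨b, Or.inl ⟨by omega, ?_⟩⟩
    rw [hE, show a = ⟨n - 1, by omega⟩ from Fin.ext haL, Finset.pair_comm]
  · rcases eq_or_ne b.val (n - 1) with hbL | hbL
    · refine ⟨a, Or.inl ⟨by omega, ?_⟩⟩
      rw [hE, show b = ⟨n - 1, by omega⟩ from Fin.ext hbL]
    · -- both path edges; one must be k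
      rcases eq_or_ne a.val k with hakk | hakk
      · refine ⟨b, Or.inr ⟨by omega, by omega, ?_⟩⟩
        rw [hE, show a = ⟨k, by omega⟩ from Fin.ext hakk, Finset.pair_comm]
      · rcases eq_or_ne b.val k with hbkk | hbkk
        · refine ⟨a, Or.inr ⟨by omega, by omega, ?_⟩⟩
          rw [hE, show b = ⟨k, by omega⟩ from Fin.ext hbkk]
        · exfalso
          rcases Nat.lt_or_ge a.val b.val with h | h
          · exact key a.val b.val h (by omega) hakk hbkk fun e he => by
              have := (hmem e).mp he
              exact ⟨fun hh => this.1 (Fin.ext hh), fun hh => this.2 (Fin.ext hh)⟩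
          · exact key b.val a.val (by omega) (by omega) hbkk hakk fun e he => by
              have := (hmem e).mp he
              exact ⟨fun hh => this.2 (Fin.ext hh), fun hh => this.1 (Fin.ext hh)⟩

end Multigraph
namespace Multigraph

variable {n k : ℕ}

lemma gnm_Nst (hn : 7 ≤ n) (hk : k < n - 1) :
    (Gnm n n k hk).Nst ⟨0, by omega⟩ ⟨n - 1, by omega⟩ (n - 2) = 1 + 2 * (n - 2) := by
  classical
  set L : Fin n := ⟨n - 1, by omega⟩ with hL
  set K : Fin n := ⟨k, by omega⟩ with hK
  set A1 : Finset (Fin n) := Finset.univ.filter (fun a : Fin n => a.val < n - 1) with hA1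
  set A2 : Finset (Fin n) := A1.erase K with hA2
  have hmemA1 : ∀ a : Fin n, a ∈ A1 ↔ a.val < n - 1 := by
    intro a
    simp only [hA1, Finset.mem_filter, Finset.mem_univ, true_and]
  have hKA1 : K ∈ A1 := (hmemA1 K).mpr hk
  have hcard1 : A1.card = n - 1 := card_filter_lt_fin n (n - 1) (by omega)
  have hcard2 : A2.card = n - 2 := by
    rw [hA2, Finset.card_erase_of_mem hKA1, hcard1]
    omega
  have hLK : L ≠ K := Fin.ne_of_val_ne (show n - 1 ≠ k by omega)
  have himg : (Finset.univ.filter fun E' : Finset (Fin n) =>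
      E'.card = n - 2 ∧ (Gnm n n k hk).SplitState ⟨0, by omega⟩ ⟨n - 1, by omega⟩ E')
      = (A1.image fun a => ({a, L} : Finset (Fin n))ᶜ)
        ∪ (A2.image fun a => ({a, K} : Finset (Fin n))ᶜ) := by
    ext E'
    simp only [Finset.mem_filter, Finset.mem_univ, true_and, Finset.mem_union,
      Finset.mem_image]
    constructor
    · rintro ⟨hc, hsp⟩
      obtain ⟨c, hc1 | hc2⟩ := gnm_split_only hn hk E' hc hsp
      · exact Or.inl ⟨c, (hmemA1 c).mpr hc1.1, hc1.2.symm⟩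
      · refine Or.inr ⟨c, ?_, hc2.2.2.symm⟩
        rw [hA2, Finset.mem_erase]
        exact ⟨Fin.ne_of_val_ne hc2.2.1, (hmemA1 c).mpr hc2.1⟩
    · rintro (⟨c, hcmem, rfl⟩ | ⟨c, hcmem, rfl⟩)
      · have hc1 : c.val < n - 1 := (hmemA1 c).mp hcmem
        refine ⟨?_, gnm_split1 hn hk c hc1⟩
        rw [Finset.card_compl, Finset.card_insert_of_notMem
          (by simp only [Finset.mem_singleton]
              exact fun h => by rw [h] at hc1; simp only [hL] at hc1; omega),
          Finset.card_singleton, Fintype.card_fin]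
      · rw [hA2, Finset.mem_erase] at hcmem
        have hc1 : c.val < n - 1 := (hmemA1 c).mp hcmem.2
        have hck : c.val ≠ k := fun h => hcmem.1 (Fin.ext h)
        refine ⟨?_, gnm_split2 hn hk c hc1 hck⟩
        rw [Finset.card_compl, Finset.card_insert_of_notMem
          (by simp only [Finset.mem_singleton]
              exact fun h => hck (by rw [h])),
          Finset.card_singleton, Fintype.card_fin]
  have hinj1 : Set.InjOn (fun a : Fin n => ({a, L} : Finset (Fin n))ᶜ) A1 := by
    intro a ha b hb hab
    simp only [Finset.mem_coe] at ha hb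
    have ha1 := (hmemA1 a).mp ha
    have hb1 := (hmemA1 b).mp hb
    have hset : ({a, L} : Finset (Fin n)) = {b, L} := compl_injective hab
    have h1 : a ∈ ({b, L} : Finset (Fin n)) := by rw [← hset]; simp
    simp only [Finset.mem_insert, Finset.mem_singleton] at h1
    rcases h1 with h | h
    · exact h
    · exfalso
      have : a.val = n - 1 := by rw [h]
      omega
  have hinj2 : Set.InjOn (fun a : Fin n => ({a, K} : Finset (Fin n))ᶜ) A2 := by
    intro a ha b hb hab
    simp only [Finset.mem_coe, hA2, Finset.mem_erase] at ha hb
    have hset : ({a, K} : Finset (Fin n)) = {b, K} := compl_injective hab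
    have h1 : a ∈ ({b, K} : Finset (Fin n)) := by rw [← hset]; simp
    simp only [Finset.mem_insert, Finset.mem_singleton] at h1
    rcases h1 with h | h
    · exact h
    · exact absurd h ha.1
  have hdisj : Disjoint (A1.image fun a => ({a, L} : Finset (Fin n))ᶜ)
      (A2.image fun a => ({a, K} : Finset (Fin n))ᶜ) := by
    rw [Finset.disjoint_left]
    rintro x hx1 hx2
    obtain ⟨a, ha, rfl⟩ := Finset.mem_image.mp hx1
    obtain ⟨c, hc, hcx⟩ := Finset.mem_image.mp hx2
    rw [hA2, Finset.mem_erase] at hc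
    have hcv := (hmemA1 c).mp hc.2
    have hmemL : L ∈ ({c, K} : Finset (Fin n))ᶜ := by
      simp only [Finset.mem_compl, Finset.mem_insert, Finset.mem_singleton, not_or]
      exact ⟨Fin.ne_of_val_ne (show n - 1 ≠ c.val by omega), hLK⟩
    rw [hcx] at hmemL
    exact (Finset.mem_compl.mp hmemL)
      (Finset.mem_insert_of_mem (Finset.mem_singleton_self L))
  unfold Nst
  trans ((A1.image fun a => ({a, L} : Finset (Fin n))ᶜ)
      ∪ (A2.image fun a => ({a, K} : Finset (Fin n))ᶜ)).card
  · exact congrArg Finset.card himg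
  · rw [Finset.card_union_of_disjoint hdisj, Finset.card_image_of_injOn hinj1,
      Finset.card_image_of_injOn hinj2, hcard1, hcard2]
    omega

end Multigraph
/-- For `n ≥ 7`, the graph consisting of a path `s = u_0, …, u_{n-3} = t`
of length `n-3` together with a triangle `t, w₁, w₂` satisfies `N_{n-2}(H,s,t) = 3(n-3)`,
and `3(n-3) > 1 + 2(n-2) = N_{n-2}(G_{n,n},s,t)`. -/
theorem Nst_triGraph (n : ℕ) (hn : 7 ≤ n) :
    (Multigraph.triGraph n (by omega)).Nst
        (⟨0, by omega⟩ : Fin n) (⟨n - 3, by omega⟩ : Fin n) (n - 2) = 3 * (n - 3) ∧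
    3 * (n - 3) > 1 + 2 * (n - 2) ∧
    (∀ (k : ℕ) (hk : k < n - 1),
      (Multigraph.Gnm n n k hk).Nst
          (⟨0, by omega⟩ : Fin n) (⟨n - 1, by omega⟩ : Fin n) (n - 2) =
        1 + 2 * (n - 2)) := by
  exact ⟨Multigraph.tri_Nst hn (by omega), by omega,
    fun k hk => Multigraph.gnm_Nst hn hk⟩
end
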